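/- arXiv:1109.1806 — 3 statements merged into one kernel-verified Lean document; each statement's English description precedes it below -/
import Mathlib

section
/- Let A be a commutative ring, let S be a step set that contains every horizontal step (a,0) with a ≥ 1 and such that every (a,b) ∈ S with b > 0 satisfies a ≤ b, and let w : S → A be a weight function assigning the same element ρ ∈ A to every horizontal step (a,0). Let P^w(t) = Σ_{n≥0} p^w_n tⁿ, let T^w(t) = Σ_{a≥1, (a,a)∈S} w((a,a)) tᵃ, let E_0^w(t) be the power series whose coefficient of tⁿ is Σ_{j=0}^{n} a^w_{j,n}, and let E_1^w(t) be the power series whose coefficient of tⁿ is Σ_{j=0}^{n−1} a^w_{j,n}. Then in A⟦t⟧: P^w(t) · (1 + (1 + ρ − T^w(t)) · E_1^w(t)) = E_0^w(t). -/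
/-- x-coordinate of the `j`-th node of the path `p` (partial sum of first coordinates). -/
def xPart (p : List (ℕ × ℕ)) (j : ℕ) : ℕ := ((p.take j).map Prod.fst).sum

/-- y-coordinate of the `j`-th node of the path `p` (partial sum of second coordinates). -/
def yPart (p : List (ℕ × ℕ)) (j : ℕ) : ℕ := ((p.take j).map Prod.snd).sum

/-- `p` is an `S`-path from `(0,0)` to `(n,m)`. -/
def IsPath (S : Set (ℕ × ℕ)) (n m : ℕ) (p : List (ℕ × ℕ)) : Prop :=
  (∀ st ∈ p, st ∈ S) ∧ xPart p p.length = n ∧ yPart p p.length = m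

/-- `p` is Catalan: every node `(x, y)` satisfies `x ≤ y`. -/
def IsCatalan (p : List (ℕ × ℕ)) : Prop :=
  ∀ j ≤ p.length, xPart p j ≤ yPart p j

/-- The number of `S`-paths from `(0,0)` to `(n,m)`. -/
noncomputable def aCount (S : Set (ℕ × ℕ)) (n m : ℕ) : ℕ :=
  Set.ncard {p : List (ℕ × ℕ) | IsPath S n m p}

/-- The number of Catalan `S`-paths from `(0,0)` to `(n,n)`. -/
noncomputable def pCatalan (S : Set (ℕ × ℕ)) (n : ℕ) : ℕ :=
  Set.ncard {p : List (ℕ × ℕ) | IsPath S n n p ∧ IsCatalan p}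

namespace SP14

/-- total x displacement -/
def Xt (p : List (ℕ × ℕ)) : ℕ := (p.map Prod.fst).sum
/-- total y displacement -/
def Yt (p : List (ℕ × ℕ)) : ℕ := (p.map Prod.snd).sum

lemma xPart_eq_Xt_take (p : List (ℕ × ℕ)) (j : ℕ) : xPart p j = Xt (p.take j) := rfl
lemma yPart_eq_Yt_take (p : List (ℕ × ℕ)) (j : ℕ) : yPart p j = Yt (p.take j) := rfl

lemma xPart_length (p : List (ℕ × ℕ)) : xPart p p.length = Xt p := by
  simp [xPart, Xt]
lemma yPart_length (p : List (ℕ × ℕ)) : yPart p p.length = Yt p := by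
  simp [yPart, Yt]

lemma Xt_append (q r : List (ℕ × ℕ)) : Xt (q ++ r) = Xt q + Xt r := by
  simp [Xt]
lemma Yt_append (q r : List (ℕ × ℕ)) : Yt (q ++ r) = Yt q + Yt r := by
  simp [Yt]

lemma xPart_append (q r : List (ℕ × ℕ)) (i : ℕ) :
    xPart (q ++ r) i = xPart q i + xPart r (i - q.length) := by
  unfold xPart
  rw [List.take_append, List.map_append, List.sum_append]

lemma yPart_append (q r : List (ℕ × ℕ)) (i : ℕ) :
    yPart (q ++ r) i = yPart q i + yPart r (i - q.length) := by
  unfold yPart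
  rw [List.take_append, List.map_append, List.sum_append]

lemma xPart_take (p : List (ℕ × ℕ)) (c j : ℕ) :
    xPart (p.take c) j = xPart p (min j c) := by
  unfold xPart; rw [List.take_take]

lemma yPart_take (p : List (ℕ × ℕ)) (c j : ℕ) :
    yPart (p.take c) j = yPart p (min j c) := by
  unfold yPart; rw [List.take_take]

lemma xPart_zero (p : List (ℕ × ℕ)) : xPart p 0 = 0 := by simp [xPart]
lemma yPart_zero (p : List (ℕ × ℕ)) : yPart p 0 = 0 := by simp [yPart]

lemma xPart_of_le (p : List (ℕ × ℕ)) {i : ℕ} (h : p.length ≤ i) : xPart p i = Xt p := by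
  unfold xPart Xt; rw [List.take_of_length_le h]
lemma yPart_of_le (p : List (ℕ × ℕ)) {i : ℕ} (h : p.length ≤ i) : yPart p i = Yt p := by
  unfold yPart Yt; rw [List.take_of_length_le h]

/-- all steps in `S` -/
def StS (S : Set (ℕ × ℕ)) (p : List (ℕ × ℕ)) : Prop := ∀ st ∈ p, st ∈ S

/-- strictly above the diagonal after the start -/
def UpP (p : List (ℕ × ℕ)) : Prop := ∀ i, 1 ≤ i → i ≤ p.length → xPart p i < yPart p i

/-- primitive: no nontrivial Catalan prefix ending on the diagonal -/
def PrP (p : List (ℕ × ℕ)) : Prop :=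
  ∀ i, 1 ≤ i → i ≤ p.length →
    ¬ ((∀ k ≤ i, xPart p k ≤ yPart p k) ∧ xPart p i = yPart p i)

section Weight
variable {A : Type*} [CommRing A]

/-- weight of a path -/
def Wt (w : ℕ × ℕ → A) (p : List (ℕ × ℕ)) : A := (p.map w).prod

lemma Wt_append (w : ℕ × ℕ → A) (q r : List (ℕ × ℕ)) :
    Wt w (q ++ r) = Wt w q * Wt w r := by simp [Wt]

lemma Wt_nil (w : ℕ × ℕ → A) : Wt w [] = 1 := rfl

end Weight

section Finiteness

variable {S : Set (ℕ × ℕ)} (h00 : (0, 0) ∉ S)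

lemma length_le_of_StS {p : List (ℕ × ℕ)} (hp : StS S p) (h00 : (0, 0) ∉ S) :
    p.length ≤ Xt p + Yt p := by
  induction p with
  | nil => simp [Xt, Yt]
  | cons st q ih =>
    have hst : st ∈ S := hp st (List.mem_cons_self)
    have h1 : 1 ≤ st.1 + st.2 := by
      rcases Nat.eq_zero_or_pos (st.1 + st.2) with h | h
      · exfalso; apply h00
        have h1 : st.1 = 0 := by omega
        have h2 : st.2 = 0 := by omega
        have : st = (0, 0) := Prod.ext h1 h2
        rwa [this] at hst
      · exact h
    have ihq := ih (fun s hs => hp s (List.mem_cons_of_mem _ hs))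
    simp only [Xt, Yt, List.map_cons, List.sum_cons, List.length_cons] at *
    omega

lemma finite_master (h00 : (0, 0) ∉ S) (N : ℕ) :
    {p : List (ℕ × ℕ) | StS S p ∧ Xt p + Yt p ≤ N}.Finite := by
  classical
  have hT : ({st : ℕ × ℕ | st.1 ≤ N ∧ st.2 ≤ N}).Finite := by
    have : {st : ℕ × ℕ | st.1 ≤ N ∧ st.2 ≤ N} ⊆ Set.Iic N ×ˢ Set.Iic N := by
      intro st hst; exact ⟨hst.1, hst.2⟩
    exact ((Set.finite_Iic N).prod (Set.finite_Iic N)).subset this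
  haveI : Finite ↥{st : ℕ × ℕ | st.1 ≤ N ∧ st.2 ≤ N} := hT.to_subtype
  have hL : {l : List ↥{st : ℕ × ℕ | st.1 ≤ N ∧ st.2 ≤ N} | l.length ≤ N}.Finite :=
    List.finite_length_le _ N
  have himg := hL.image (List.map Subtype.val)
  apply himg.subset
  intro p hp
  obtain ⟨hSt, hsum⟩ := hp
  have hmem : ∀ st ∈ p, st.1 ≤ N ∧ st.2 ≤ N := by
    intro st hst
    constructor
    · have h1 : st.1 ≤ Xt p := List.single_le_sum (by simp) _ (List.mem_map_of_mem (f := Prod.fst) hst)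
      omega
    · have h1 : st.2 ≤ Yt p := List.single_le_sum (by simp) _ (List.mem_map_of_mem (f := Prod.snd) hst)
      omega
  refine ⟨p.attach.map (fun x => ⟨x.1, hmem x.1 x.2⟩), ?_, ?_⟩
  · show (p.attach.map _).length ≤ N
    rw [List.length_map, List.length_attach]
    exact le_trans (length_le_of_StS hSt h00) hsum
  · rw [List.map_map]
    exact List.attach_map_subtype_val p

end Finiteness



section Sets
variable (S : Set (ℕ × ℕ))

/-- paths graded by total y, with end condition `Q (Xt p) m` -/
def WQ (Q : ℕ → ℕ → Prop) (m : ℕ) : Set (List (ℕ × ℕ)) :=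
  {p | StS S p ∧ Yt p = m ∧ Q (Xt p) m}

/-- primitive paths with end condition -/
def PrQ (Q : ℕ → ℕ → Prop) (m : ℕ) : Set (List (ℕ × ℕ)) :=
  {p | p ∈ WQ S Q m ∧ PrP p}

/-- Catalan paths to the diagonal -/
def CatD (n : ℕ) : Set (List (ℕ × ℕ)) := {p | IsPath S n n p ∧ IsCatalan p}

/-- strictly-above paths (possibly empty) -/
def UpS (k : ℕ) : Set (List (ℕ × ℕ)) := {p | StS S p ∧ Yt p = k ∧ UpP p}

/-- nonempty strictly-above paths -/
def UpNe (k : ℕ) : Set (List (ℕ × ℕ)) := {p | p ∈ UpS S k ∧ p ≠ []}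

/-- arches -/
def ArchS (k : ℕ) : Set (List (ℕ × ℕ)) :=
  {u | StS S u ∧ Xt u = k ∧ Yt u = k ∧ u ≠ [] ∧
    ∀ i, 1 ≤ i → i < u.length → xPart u i < yPart u i}

/-- marked paths -/
def MQ (Q : ℕ → ℕ → Prop) (l : ℕ) : Set (ℕ × List (ℕ × ℕ)) :=
  {z | 1 ≤ z.1 ∧ StS S z.2 ∧ Yt z.2 = l ∧ Q (Xt z.2 + z.1) l}

variable {S}

lemma WQ_finite (h00 : (0, 0) ∉ S) {Q : ℕ → ℕ → Prop} (hQb : ∀ x m, Q x m → x ≤ m)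
    (m : ℕ) : (WQ S Q m).Finite := by
  apply (finite_master h00 (m + m)).subset
  rintro p ⟨h1, h2, h3⟩
  exact ⟨h1, by have := hQb _ _ h3; omega⟩

lemma PrQ_finite (h00 : (0, 0) ∉ S) {Q : ℕ → ℕ → Prop} (hQb : ∀ x m, Q x m → x ≤ m)
    (m : ℕ) : (PrQ S Q m).Finite :=
  (WQ_finite h00 hQb m).subset fun _ h => h.1

lemma CatD_finite (h00 : (0, 0) ∉ S) (n : ℕ) : (CatD S n).Finite := by
  apply (finite_master h00 (n + n)).subset
  rintro p ⟨⟨h1, h2, h3⟩, _⟩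
  rw [xPart_length] at h2; rw [yPart_length] at h3
  exact ⟨h1, by omega⟩

lemma Xt_le_Yt_of_UpP {p : List (ℕ × ℕ)} (h : UpP p) : Xt p ≤ Yt p := by
  rcases eq_or_ne p [] with rfl | hne
  · simp [Xt, Yt]
  · have h1 : 1 ≤ p.length := by
      rw [Nat.one_le_iff_ne_zero]
      simpa using hne
    have := h p.length h1 le_rfl
    rw [xPart_length, yPart_length] at this
    omega

lemma UpS_finite (h00 : (0, 0) ∉ S) (k : ℕ) : (UpS S k).Finite := by
  apply (finite_master h00 (k + k)).subset
  rintro p ⟨h1, h2, h3⟩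
  exact ⟨h1, by have := Xt_le_Yt_of_UpP h3; omega⟩

lemma UpNe_finite (h00 : (0, 0) ∉ S) (k : ℕ) : (UpNe S k).Finite :=
  (UpS_finite h00 k).subset fun _ h => h.1

lemma ArchS_finite (h00 : (0, 0) ∉ S) (k : ℕ) : (ArchS S k).Finite := by
  apply (finite_master h00 (k + k)).subset
  rintro p ⟨h1, h2, h3, _⟩
  exact ⟨h1, by omega⟩

lemma MQ_finite (h00 : (0, 0) ∉ S) {Q : ℕ → ℕ → Prop} (hQb : ∀ x m, Q x m → x ≤ m)
    (l : ℕ) : (MQ S Q l).Finite := by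
  have : MQ S Q l ⊆ (Set.Icc 1 l) ×ˢ {p : List (ℕ × ℕ) | StS S p ∧ Xt p + Yt p ≤ l + l} := by
    rintro ⟨a, p⟩ ⟨h1, h2, h3, h4⟩
    have hb := hQb _ _ h4
    exact ⟨⟨h1, by omega⟩, h2, by omega⟩
  exact ((Set.finite_Icc 1 l).prod (finite_master h00 (l + l))).subset this

end Sets

section Series
variable {A : Type*} [CommRing A] (w : ℕ × ℕ → A)

/-- generating series of a graded family of path sets -/
noncomputable def ser (X : ℕ → Set (List (ℕ × ℕ))) : PowerSeries A :=
  PowerSeries.mk fun n => ∑ᶠ p ∈ X n, Wt w p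

/-- generating series of a graded family of marked path sets -/
noncomputable def serM (X : ℕ → Set (ℕ × List (ℕ × ℕ))) : PowerSeries A :=
  PowerSeries.mk fun n => ∑ᶠ z ∈ X n, Wt w z.2

/-- Generic unique-factorization lemma: if every path of `X` factors uniquely as a
concatenation of a `Y`-path and a `Z`-path, then the series multiply. -/
lemma ser_mul_ser
    (X Y Z : ℕ → Set (List (ℕ × ℕ)))
    (hXf : ∀ n, (X n).Finite) (hYf : ∀ k, (Y k).Finite) (hZf : ∀ m, (Z m).Finite)
    (hXg : ∀ n p, p ∈ X n → Yt p = n)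
    (hYg : ∀ k q, q ∈ Y k → Yt q = k) (hZg : ∀ m r, r ∈ Z m → Yt r = m)
    (hfwd : ∀ k m q r, q ∈ Y k → r ∈ Z m → q ++ r ∈ X (k + m))
    (hex : ∀ n p, p ∈ X n → ∃ q r, q ∈ Y (Yt q) ∧ r ∈ Z (Yt r) ∧ p = q ++ r)
    (huniq : ∀ q r q' r', q ∈ Y (Yt q) → r ∈ Z (Yt r) → q' ∈ Y (Yt q') → r' ∈ Z (Yt r') →
      q ++ r = q' ++ r' → q = q') :
    ser w X = ser w Y * ser w Z := by
  classical
  ext n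
  rw [PowerSeries.coeff_mul]
  simp only [ser, PowerSeries.coeff_mk]
  rw [finsum_mem_eq_finite_toFinset_sum _ (hXf n)]
  have hcoef : ∀ km : ℕ × ℕ,
      (∑ᶠ q ∈ Y km.1, Wt w q) * (∑ᶠ r ∈ Z km.2, Wt w r) =
      ∑ qr ∈ (hYf km.1).toFinset ×ˢ (hZf km.2).toFinset, Wt w qr.1 * Wt w qr.2 := by
    intro km
    rw [finsum_mem_eq_finite_toFinset_sum _ (hYf km.1),
      finsum_mem_eq_finite_toFinset_sum _ (hZf km.2), Finset.sum_mul_sum]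
    rw [Finset.sum_product]
  calc ∑ p ∈ (hXf n).toFinset, Wt w p
      = ∑ x ∈ (Finset.HasAntidiagonal.antidiagonal n).sigma
          (fun km => (hYf km.1).toFinset ×ˢ (hZf km.2).toFinset),
          Wt w x.2.1 * Wt w x.2.2 := by
        refine (Finset.sum_bij (fun x _ => x.2.1 ++ x.2.2) ?_ ?_ ?_ ?_).symm
        · rintro ⟨⟨k, m⟩, q, r⟩ hx
          simp only [Finset.mem_sigma, Finset.mem_product, Set.Finite.mem_toFinset,
            Finset.HasAntidiagonal.mem_antidiagonal] at hx
          rw [Set.Finite.mem_toFinset]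
          have := hfwd k m q r hx.2.1 hx.2.2
          rwa [hx.1] at this
        · rintro ⟨⟨k, m⟩, q, r⟩ hx ⟨⟨k', m'⟩, q', r'⟩ hx' heq
          simp only [Finset.mem_sigma, Finset.mem_product, Set.Finite.mem_toFinset,
            Finset.HasAntidiagonal.mem_antidiagonal] at hx hx'
          have hk : Yt q = k := hYg _ _ hx.2.1
          have hm : Yt r = m := hZg _ _ hx.2.2
          have hk' : Yt q' = k' := hYg _ _ hx'.2.1
          have hm' : Yt r' = m' := hZg _ _ hx'.2.2
          have hq : q = q' := huniq q r q' r'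
            (by rw [hk]; exact hx.2.1) (by rw [hm]; exact hx.2.2)
            (by rw [hk']; exact hx'.2.1) (by rw [hm']; exact hx'.2.2) heq
          subst hq
          have hr : r = r' := List.append_cancel_left heq
          subst hr
          simp only [Sigma.mk.inj_iff, Prod.mk.injEq, heq_eq_eq, and_true, true_and]
          omega
        · intro p hp
          rw [Set.Finite.mem_toFinset] at hp
          obtain ⟨q, r, hq, hr, rfl⟩ := hex n p hp
          refine ⟨⟨⟨Yt q, Yt r⟩, q, r⟩, ?_, rfl⟩
          simp only [Finset.mem_sigma, Finset.mem_product, Set.Finite.mem_toFinset,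
            Finset.HasAntidiagonal.mem_antidiagonal]
          refine ⟨?_, hq, hr⟩
          have := hXg n _ hp
          rw [Yt_append] at this
          omega
        · rintro ⟨⟨k, m⟩, q, r⟩ _
          rw [Wt_append]
      _ = ∑ km ∈ Finset.HasAntidiagonal.antidiagonal n,
            ∑ qr ∈ (hYf km.1).toFinset ×ˢ (hZf km.2).toFinset, Wt w qr.1 * Wt w qr.2 := by
        rw [Finset.sum_sigma]
      _ = ∑ km ∈ Finset.HasAntidiagonal.antidiagonal n,
            (∑ᶠ q ∈ Y km.1, Wt w q) * (∑ᶠ r ∈ Z km.2, Wt w r) := by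
        refine Finset.sum_congr rfl fun km _ => (hcoef km).symm

end Series



section Nodes

lemma xPart_prefix (p : List (ℕ × ℕ)) {c j : ℕ} (hj : j ≤ c) :
    xPart (p.take c) j = xPart p j := by rw [xPart_take, min_eq_left hj]
lemma yPart_prefix (p : List (ℕ × ℕ)) {c j : ℕ} (hj : j ≤ c) :
    yPart (p.take c) j = yPart p j := by rw [yPart_take, min_eq_left hj]

lemma xPart_append_right (q r : List (ℕ × ℕ)) (i : ℕ) :
    xPart (q ++ r) (q.length + i) = Xt q + xPart r i := by
  rw [xPart_append]
  congr 1
  · exact xPart_of_le q (Nat.le_add_right _ _)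
  · congr 1; omega

lemma yPart_append_right (q r : List (ℕ × ℕ)) (i : ℕ) :
    yPart (q ++ r) (q.length + i) = Yt q + yPart r i := by
  rw [yPart_append]
  congr 1
  · exact yPart_of_le q (Nat.le_add_right _ _)
  · congr 1; omega

lemma xPart_append_left (q r : List (ℕ × ℕ)) {i : ℕ} (hi : i ≤ q.length) :
    xPart (q ++ r) i = xPart q i := by
  rw [xPart_append, Nat.sub_eq_zero_of_le hi, xPart_zero, add_zero]

lemma yPart_append_left (q r : List (ℕ × ℕ)) {i : ℕ} (hi : i ≤ q.length) :
    yPart (q ++ r) i = yPart q i := by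
  rw [yPart_append, Nat.sub_eq_zero_of_le hi, yPart_zero, add_zero]

lemma xPart_succ (p : List (ℕ × ℕ)) {i : ℕ} (h : i < p.length) :
    xPart p (i + 1) = xPart p i + (p[i]).1 := by
  unfold xPart
  rw [← List.take_concat_get' p i h, List.map_append, List.sum_append]
  simp

lemma yPart_succ (p : List (ℕ × ℕ)) {i : ℕ} (h : i < p.length) :
    yPart p (i + 1) = yPart p i + (p[i]).2 := by
  unfold yPart
  rw [← List.take_concat_get' p i h, List.map_append, List.sum_append]
  simp

end Nodes

section Cut

/-- cut predicate: Catalan prefix ending on the diagonal -/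
def cutPred (p : List (ℕ × ℕ)) (i : ℕ) : Prop :=
  (∀ k ≤ i, xPart p k ≤ yPart p k) ∧ xPart p i = yPart p i

lemma cutPred_zero (p : List (ℕ × ℕ)) : cutPred p 0 :=
  ⟨fun k hk => by interval_cases k; simp [xPart_zero, yPart_zero],
   by rw [xPart_zero, yPart_zero]⟩

open Classical in
/-- the maximal Catalan-diagonal cut point -/
noncomputable def cutP (p : List (ℕ × ℕ)) : ℕ :=
  Nat.findGreatest (cutPred p) p.length

open Classical in
lemma cutP_le (p : List (ℕ × ℕ)) : cutP p ≤ p.length := Nat.findGreatest_le _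

open Classical in
lemma cutP_spec (p : List (ℕ × ℕ)) : cutPred p (cutP p) :=
  Nat.findGreatest_spec (Nat.zero_le _) (cutPred_zero p)

open Classical in
lemma cutP_greatest {p : List (ℕ × ℕ)} {i : ℕ} (h1 : cutP p < i) (h2 : i ≤ p.length) :
    ¬ cutPred p i := Nat.findGreatest_is_greatest h1 h2

open Classical in
lemma le_cutP {p : List (ℕ × ℕ)} {i : ℕ} (h1 : i ≤ p.length) (h2 : cutPred p i) :
    i ≤ cutP p := Nat.le_findGreatest h1 h2

lemma split_len {q r : List (ℕ × ℕ)} (hcatq : IsCatalan q) (hdq : Xt q = Yt q)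
    (hr : PrP r) : q.length = cutP (q ++ r) := by
  have hlen : (q ++ r).length = q.length + r.length := List.length_append
  have hxnode : ∀ k, xPart (q ++ r) (q.length + k) = Xt q + xPart r k :=
    fun k => xPart_append_right q r k
  have hynode : ∀ k, yPart (q ++ r) (q.length + k) = Yt q + yPart r k :=
    fun k => yPart_append_right q r k
  have h1 : q.length ≤ cutP (q ++ r) := by
    apply le_cutP (by omega)
    constructor
    · intro k hk
      rw [xPart_append_left q r hk, yPart_append_left q r hk]
      exact hcatq k hk
    · have hx0 := hxnode 0
      have hy0 := hynode 0
      rw [add_zero] at hx0 hy0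
      rw [hx0, hy0, xPart_zero, yPart_zero, hdq]
  by_contra hne
  have h2 : q.length < cutP (q ++ r) := lt_of_le_of_ne h1 hne
  set c := cutP (q ++ r) with hc
  have hcle : c ≤ q.length + r.length := by rw [← hlen]; exact cutP_le _
  have hspec := cutP_spec (q ++ r)
  refine hr (c - q.length) (by omega) (by omega) ⟨?_, ?_⟩
  · intro k hk
    have := hspec.1 (q.length + k) (by omega)
    rw [hxnode, hynode, hdq] at this
    omega
  · have := hspec.2
    rw [← hc] at this
    rw [show c = q.length + (c - q.length) by omega, hxnode, hynode, hdq] at this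
    omega

end Cut

section G1
variable {S : Set (ℕ × ℕ)} {A : Type*} [CommRing A]

lemma CatD_diag {k : ℕ} {q : List (ℕ × ℕ)} (hq : q ∈ CatD S k) :
    Xt q = k ∧ Yt q = k := by
  obtain ⟨⟨_, hx, hy⟩, _⟩ := hq
  rw [xPart_length] at hx; rw [yPart_length] at hy
  exact ⟨hx, hy⟩

lemma G1 (h00 : (0, 0) ∉ S) (w : ℕ × ℕ → A)
    {Q : ℕ → ℕ → Prop} (hQs : ∀ c x y, Q (c + x) (c + y) ↔ Q x y)
    (hQb : ∀ x m, Q x m → x ≤ m) :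
    ser w (WQ S Q) = ser w (CatD S) * ser w (PrQ S Q) := by
  apply ser_mul_ser w _ _ _ (WQ_finite h00 hQb) (CatD_finite h00) (PrQ_finite h00 hQb)
  · rintro n p ⟨_, h2, _⟩; exact h2
  · intro k q hq; exact (CatD_diag hq).2
  · rintro m r ⟨⟨_, h2, _⟩, _⟩; exact h2
  · -- forward
    rintro k m q r ⟨⟨hqS, _, _⟩, hqcat⟩ ⟨⟨hrS, hrY, hrQ⟩, _⟩
    obtain ⟨hqX, hqY⟩ := CatD_diag ⟨⟨hqS, by assumption, by assumption⟩, hqcat⟩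
    refine ⟨?_, ?_, ?_⟩
    · intro st hst
      rcases List.mem_append.mp hst with h | h
      · exact hqS st h
      · exact hrS st h
    · rw [Yt_append, hqY, hrY]
    · rw [Xt_append, hqX]
      exact (hQs k (Xt r) m).mpr hrQ
  · -- existence of split
    rintro n p ⟨hSt, hYt, hQp⟩
    set c := cutP p with hcdef
    have hcle : c ≤ p.length := cutP_le p
    have hspec := cutP_spec p
    set q := p.take c with hq
    set r := p.drop c with hr
    have hqr : q ++ r = p := List.take_append_drop c p
    have hlq : q.length = c := by rw [hq, List.length_take]; omega
    have hXq : Xt q = xPart p c := by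
      rw [← xPart_length q, hlq, hq, xPart_take, min_self]
    have hYq : Yt q = yPart p c := by
      rw [← yPart_length q, hlq, hq, yPart_take, min_self]
    have hdiag : Xt q = Yt q := by rw [hXq, hYq]; exact hspec.2
    have hXp : Xt p = Xt q + Xt r := by rw [← hqr, Xt_append]
    have hYp : Yt p = Yt q + Yt r := by rw [← hqr, Yt_append]
    have hxnode : ∀ k, xPart p (c + k) = Xt q + xPart r k := by
      intro k
      conv_lhs => rw [← hqr]
      rw [show c + k = q.length + k by rw [hlq], xPart_append_right]
    have hynode : ∀ k, yPart p (c + k) = Yt q + yPart r k := by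
      intro k
      conv_lhs => rw [← hqr]
      rw [show c + k = q.length + k by rw [hlq], yPart_append_right]
    have hplen : p.length = c + r.length := by
      rw [← hqr, List.length_append, hlq]
    refine ⟨q, r, ⟨⟨?_, ?_, ?_⟩, ?_⟩, ⟨⟨?_, rfl, ?_⟩, ?_⟩, hqr.symm⟩
    · exact fun st hst => hSt st (List.mem_of_mem_take hst)
    · rw [xPart_length]; exact hdiag
    · rw [yPart_length]
    · intro j hj
      rw [hlq] at hj
      rw [hq, xPart_prefix p hj, yPart_prefix p hj]
      exact hspec.1 j hj
    · exact fun st hst => hSt st (List.mem_of_mem_drop hst)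
    · -- Q (Xt r) (Yt r)
      have hQp' : Q (Yt q + Xt r) (Yt q + Yt r) := by
        rw [← hdiag, ← hXp]
        rw [hdiag, ← hYp, hYt]
        exact hQp
      exact (hQs (Yt q) (Xt r) (Yt r)).mp hQp'
    · -- PrP r
      intro i h1 h2 ⟨hcat, hdg⟩
      refine cutP_greatest (p := p) (i := c + i) (by omega) (by omega) ⟨?_, ?_⟩
      · intro k hk
        rcases le_or_gt k c with h | h
        · exact hspec.1 k h
        · have hk2 : k = c + (k - c) := by omega
          rw [hk2, hxnode, hynode, hdiag]
          have := hcat (k - c) (by omega)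
          omega
      · rw [hxnode, hynode, hdiag, hdg]
  · -- uniqueness
    rintro q r q' r' hq hr hq' hr' heq
    have hd := CatD_diag hq
    have hd' := CatD_diag hq'
    have e1 : q.length = cutP (q ++ r) :=
      split_len hq.2 (hd.1.trans hd.2.symm) hr.2
    have e2 : q'.length = cutP (q' ++ r') :=
      split_len hq'.2 (hd'.1.trans hd'.2.symm) hr'.2
    rw [heq] at e1
    exact (List.append_inj heq (e1.trans e2.symm)).1

end G1



section G4
variable {S : Set (ℕ × ℕ)} {A : Type*} [CommRing A]

lemma Xt_singleton (st : ℕ × ℕ) : Xt [st] = st.1 := by simp [Xt]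
lemma Yt_singleton (st : ℕ × ℕ) : Yt [st] = st.2 := by simp [Yt]
lemma Wt_singleton (w : ℕ × ℕ → A) (st : ℕ × ℕ) : Wt w [st] = w st := by simp [Wt]

lemma nil_of_tot_eq_zero (h00 : (0, 0) ∉ S) {p : List (ℕ × ℕ)} (hSt : StS S p)
    (hx : Xt p = 0) (hy : Yt p = 0) : p = [] := by
  cases p with
  | nil => rfl
  | cons st q =>
    exfalso
    simp only [Xt, Yt, List.map_cons, List.sum_cons] at hx hy
    have h1 : st = (0, 0) := Prod.ext (by omega) (by omega)
    exact h00 (h1 ▸ hSt st (List.mem_cons_self))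

lemma ser_eq_one_add (w : ℕ × ℕ → A) {X : ℕ → Set (List (ℕ × ℕ))}
    (h0 : X 0 = {[]}) (hn : ∀ n, 0 < n → [] ∉ X n) :
    ser w X = 1 + ser w (fun n => {p ∈ X n | p ≠ []}) := by
  ext n
  rw [map_add, PowerSeries.coeff_one]
  simp only [ser, PowerSeries.coeff_mk]
  rcases Nat.eq_zero_or_pos n with rfl | hpos
  · rw [h0]
    have he : {p ∈ ({[]} : Set (List (ℕ × ℕ))) | p ≠ []} = ∅ := by
      ext p; simp (config := { contextual := true })
    rw [he, finsum_mem_empty, finsum_mem_singleton]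
    simp [Wt]
  · have he : {p ∈ X n | p ≠ []} = X n := by
      ext p
      simp only [Set.mem_setOf_eq, and_iff_left_iff_imp]
      rintro hp rfl
      exact hn n hpos hp
    rw [he, if_neg (by omega), zero_add]

lemma CatD_zero (h00 : (0, 0) ∉ S) : CatD S 0 = {[]} := by
  ext p
  constructor
  · rintro ⟨⟨hSt, hx, hy⟩, _⟩
    rw [xPart_length] at hx; rw [yPart_length] at hy
    exact nil_of_tot_eq_zero h00 hSt hx hy
  · rintro rfl
    refine ⟨⟨fun st hst => absurd hst List.not_mem_nil, rfl, rfl⟩, ?_⟩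
    intro j hj
    simp only [List.length_nil, Nat.le_zero] at hj
    subst hj
    simp [xPart_zero, yPart_zero]

lemma nil_notMem_CatD {n : ℕ} (hn : 0 < n) : [] ∉ CatD S n := by
  rintro ⟨⟨_, _, hy⟩, _⟩
  simp [yPart] at hy
  omega

/-- first-return decomposition of nonempty Catalan diagonal paths -/
lemma G4b (h00 : (0, 0) ∉ S) (w : ℕ × ℕ → A) :
    ser w (fun n => {p ∈ CatD S n | p ≠ []}) = ser w (ArchS S) * ser w (CatD S) := by
  classical
  have arch_split : ∀ (u p' : List (ℕ × ℕ)), (∃ k, u ∈ ArchS S k) → (∃ m, p' ∈ CatD S m) →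
      (∀ i, 1 ≤ i → i < u.length → xPart (u ++ p') i < yPart (u ++ p') i) ∧
      xPart (u ++ p') u.length = yPart (u ++ p') u.length ∧ 1 ≤ u.length := by
    rintro u p' ⟨k, hSt, hXu, hYu, hne, hint⟩ ⟨m, hp'⟩
    refine ⟨?_, ?_, List.length_pos_iff.mpr hne⟩
    · intro i h1 h2
      rw [xPart_append_left u p' (le_of_lt h2), yPart_append_left u p' (le_of_lt h2)]
      exact hint i h1 h2
    · rw [xPart_append_left u p' le_rfl, yPart_append_left u p' le_rfl,
        xPart_length, yPart_length, hXu, hYu]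
  apply ser_mul_ser w _ _ _
    (fun n => ((CatD_finite h00 n).subset (fun p h => h.1)))
    (ArchS_finite h00) (CatD_finite h00)
  · rintro n p ⟨hp, _⟩; exact (CatD_diag hp).2
  · rintro k u ⟨_, _, h, _⟩; exact h
  · rintro m p' hp'; exact (CatD_diag hp').2
  · -- forward
    rintro k m u p' hu hp'
    have hu2 := hu
    have hp2 := hp'
    obtain ⟨hSt, hXu, hYu, hne, hint⟩ := hu
    obtain ⟨hXp', hYp'⟩ := CatD_diag hp'
    obtain ⟨⟨hSt', _, _⟩, hcat'⟩ := hp'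
    have hlen : (u ++ p').length = u.length + p'.length := List.length_append
    refine ⟨⟨⟨?_, ?_, ?_⟩, ?_⟩, ?_⟩
    · intro st hst
      rcases List.mem_append.mp hst with h | h
      · exact hSt st h
      · exact hSt' st h
    · rw [xPart_length, Xt_append, hXu, hXp']
    · rw [yPart_length, Yt_append, hYu, hYp']
    · -- IsCatalan
      intro j hj
      rcases Nat.lt_or_ge j u.length with h | h
      · rcases Nat.eq_zero_or_pos j with rfl | hj1
        · rw [xPart_zero, yPart_zero]
        · exact le_of_lt ((arch_split u p' ⟨k, hu2⟩ ⟨m, hp2⟩).1 j hj1 h)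
      · have hj2 : j = u.length + (j - u.length) := by omega
        rw [hj2, xPart_append_right, yPart_append_right, hXu, hYu]
        have := hcat' (j - u.length) (by omega)
        omega
    · intro hnil
      exact hne (List.append_eq_nil_iff.mp hnil).1
  · -- existence
    rintro n p ⟨hp, hne⟩
    obtain ⟨⟨hSt, hx, hy⟩, hcat⟩ := hp
    have hex0 : ∃ i, 1 ≤ i ∧ i ≤ p.length ∧ xPart p i = yPart p i :=
      ⟨p.length, List.length_pos_iff.mpr hne, le_rfl, by rw [hx, hy]⟩
    set τ := Nat.find hex0 with hτdef
    obtain ⟨hτ1, hτle, hτeq⟩ := Nat.find_spec hex0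
    have hτmin : ∀ i, i < τ → ¬(1 ≤ i ∧ i ≤ p.length ∧ xPart p i = yPart p i) :=
      fun i hi => Nat.find_min hex0 hi
    set u := p.take τ with hu
    set r := p.drop τ with hr
    have hqr : u ++ r = p := List.take_append_drop τ p
    have hlq : u.length = τ := by rw [hu, List.length_take]; omega
    have hXu : Xt u = xPart p τ := by
      rw [← xPart_length u, hlq, hu, xPart_take, min_self]
    have hYu : Yt u = yPart p τ := by
      rw [← yPart_length u, hlq, hu, yPart_take, min_self]
    have hdiag : Xt u = Yt u := by rw [hXu, hYu, hτeq]
    have hXp : Xt p = Xt u + Xt r := by rw [← hqr, Xt_append]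
    have hYp : Yt p = Yt u + Yt r := by rw [← hqr, Yt_append]
    have hxnode : ∀ k, xPart p (τ + k) = Xt u + xPart r k := by
      intro k
      conv_lhs => rw [← hqr]
      rw [show τ + k = u.length + k by rw [hlq], xPart_append_right]
    have hynode : ∀ k, yPart p (τ + k) = Yt u + yPart r k := by
      intro k
      conv_lhs => rw [← hqr]
      rw [show τ + k = u.length + k by rw [hlq], yPart_append_right]
    have hplen : p.length = τ + r.length := by
      rw [← hqr, List.length_append, hlq]
    have hXYp : Xt p = Yt p := by
      rw [← xPart_length, ← yPart_length, hx, hy]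
    refine ⟨u, r, ?_, ⟨⟨?_, ?_, ?_⟩, ?_⟩, hqr.symm⟩
    · -- u ∈ ArchS S (Yt u)
      refine ⟨fun st hst => hSt st (List.mem_of_mem_take hst), hdiag, rfl, ?_, ?_⟩
      · intro h
        rw [h] at hlq
        simp at hlq
        omega
      · intro i h1 h2
        rw [hlq] at h2
        rw [hu, xPart_prefix p (le_of_lt h2), yPart_prefix p (le_of_lt h2)]
        have hle := hcat i (by omega)
        have hne2 := hτmin i h2
        push_neg at hne2
        exact lt_of_le_of_ne hle (hne2 h1 (by omega))
    · exact fun st hst => hSt st (List.mem_of_mem_drop hst)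
    · rw [xPart_length]
      omega
    · rw [yPart_length]
    · -- IsCatalan r
      intro j hj
      have := hcat (τ + j) (by omega)
      rw [hxnode, hynode] at this
      omega
  · -- uniqueness
    rintro u r u' r' hu hr hu' hr' heq
    have h1 := arch_split u r ⟨_, hu⟩ ⟨_, hr⟩
    have h2 := arch_split u' r' ⟨_, hu'⟩ ⟨_, hr'⟩
    rw [heq] at h1
    have hlen : u.length = u'.length := by
      by_contra hne
      rcases Nat.lt_or_ge u.length u'.length with h | h
      · have := h2.1 u.length h1.2.2 h
        omega
      · have hlt : u'.length < u.length := by omega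
        have := h1.1 u'.length h2.2.2 hlt
        omega
    exact (List.append_inj heq hlen).1

end G4



section G4c
variable {S : Set (ℕ × ℕ)} {A : Type*} [CommRing A]

lemma Xt_cons (st : ℕ × ℕ) (r : List (ℕ × ℕ)) : Xt (st :: r) = st.1 + Xt r := by simp [Xt]
lemma Yt_cons (st : ℕ × ℕ) (r : List (ℕ × ℕ)) : Yt (st :: r) = st.2 + Yt r := by simp [Yt]
lemma Wt_cons (w : ℕ × ℕ → A) (st : ℕ × ℕ) (r : List (ℕ × ℕ)) :
    Wt w (st :: r) = w st * Wt w r := by simp [Wt]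
lemma xPart_cons_one (st : ℕ × ℕ) (r : List (ℕ × ℕ)) : xPart (st :: r) 1 = st.1 := by
  simp [xPart]
lemma yPart_cons_one (st : ℕ × ℕ) (r : List (ℕ × ℕ)) : yPart (st :: r) 1 = st.2 := by
  simp [yPart]

lemma Xt_lt_Yt_of_UpNe {k : ℕ} {v : List (ℕ × ℕ)} (hv : v ∈ UpNe S k) : Xt v < Yt v := by
  obtain ⟨⟨_, _, hUp⟩, hne⟩ := hv
  have := hUp v.length (List.length_pos_iff.mpr hne) le_rfl
  rwa [xPart_length, yPart_length] at this

open Classical in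
lemma G4c (h00 : (0, 0) ∉ S) (hhoriz : ∀ a : ℕ, 1 ≤ a → (a, 0) ∈ S)
    (hslope : ∀ a b : ℕ, (a, b) ∈ S → 0 < b → a ≤ b)
    (w : ℕ × ℕ → A) (ρ : A) (hw : ∀ a : ℕ, 1 ≤ a → w (a, 0) = ρ) :
    ser w (ArchS S) =
      (PowerSeries.mk fun a => if 1 ≤ a ∧ (a, a) ∈ S then w (a, a) else 0) +
        PowerSeries.C (R := A) ρ * ser w (UpNe S) := by
  classical
  ext k
  rw [map_add, PowerSeries.coeff_C_mul]
  simp only [ser, PowerSeries.coeff_mk]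
  have hsplit : ArchS S k =
      {u ∈ ArchS S k | u.length = 1} ∪ {u ∈ ArchS S k | u.length ≠ 1} := by
    ext u
    by_cases h : u.length = 1 <;> simp [h]
  have hdisj : Disjoint {u ∈ ArchS S k | u.length = 1} {u ∈ ArchS S k | u.length ≠ 1} := by
    rw [Set.disjoint_left]
    rintro u ⟨_, h1⟩ ⟨_, h2⟩
    exact h2 h1
  have hf1 : {u ∈ ArchS S k | u.length = 1}.Finite :=
    (ArchS_finite h00 k).subset fun _ h => h.1
  have hf2 : {u ∈ ArchS S k | u.length ≠ 1}.Finite :=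
    (ArchS_finite h00 k).subset fun _ h => h.1
  rw [hsplit, finsum_mem_union hdisj hf1 hf2]
  congr 1
  · -- length-one arches give the diagonal-step series
    by_cases hk : 1 ≤ k ∧ (k, k) ∈ S
    · have he : {u ∈ ArchS S k | u.length = 1} = {[(k, k)]} := by
        ext u
        constructor
        · rintro ⟨⟨hSt, hXu, hYu, _, _⟩, hlen⟩
          obtain ⟨st, rfl⟩ := List.length_eq_one_iff.mp hlen
          rw [Xt_singleton] at hXu
          rw [Yt_singleton] at hYu
          have : st = (k, k) := Prod.ext hXu hYu
          rw [this]; rfl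
        · rintro rfl
          refine ⟨⟨?_, Xt_singleton _, Yt_singleton _, by simp, ?_⟩, rfl⟩
          · intro st hst
            simp only [List.mem_singleton] at hst
            rw [hst]; exact hk.2
          · intro i h1 h2
            simp only [List.length_singleton] at h2
            omega
      rw [he, finsum_mem_singleton, if_pos hk, Wt_singleton]
    · have he : {u ∈ ArchS S k | u.length = 1} = ∅ := by
        ext u
        simp only [Set.mem_empty_iff_false, iff_false]
        rintro ⟨⟨hSt, hXu, hYu, _, _⟩, hlen⟩
        obtain ⟨st, rfl⟩ := List.length_eq_one_iff.mp hlen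
        rw [Xt_singleton] at hXu
        rw [Yt_singleton] at hYu
        have hmem : st ∈ S := hSt st (List.mem_singleton_self st)
        have hk1 : 1 ≤ k := by
          by_contra hk0
          apply h00
          have : st = (0, 0) := Prod.ext (by omega) (by omega)
          rwa [this] at hmem
        exact hk ⟨hk1, by rwa [show (k, k) = st from (Prod.ext hXu hYu).symm]⟩
      rw [he, finsum_mem_empty, if_neg hk]
  · -- longer arches are closed strictly-above paths
    have hbij : Set.BijOn (fun v => v ++ [(Yt v - Xt v, 0)]) (UpNe S k)
        {u ∈ ArchS S k | u.length ≠ 1} := by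
      refine ⟨?_, ?_, ?_⟩
      · -- maps to
        intro v hv
        have hlt := Xt_lt_Yt_of_UpNe hv
        obtain ⟨⟨hSt, hY, hUp⟩, hne⟩ := hv
        have hlen : (v ++ [(Yt v - Xt v, 0)]).length = v.length + 1 := by simp
        refine ⟨⟨?_, ?_, ?_, ?_, ?_⟩, ?_⟩
        · intro st hst
          rcases List.mem_append.mp hst with h | h
          · exact hSt st h
          · simp only [List.mem_singleton] at h
            rw [h]; exact hhoriz _ (by omega)
        · rw [Xt_append, Xt_singleton]; simp only; omega
        · rw [Yt_append, Yt_singleton]; simp only; omega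
        · simp
        · intro i h1 h2
          rw [hlen] at h2
          have hi : i ≤ v.length := by omega
          rw [xPart_append_left v _ hi, yPart_append_left v _ hi]
          exact hUp i h1 (by omega)
        · rw [hlen]
          have : 1 ≤ v.length := List.length_pos_iff.mpr hne
          omega
      · -- inj on
        intro v1 h1 v2 h2 heq
        have hl : v1.length = v2.length := by
          have := congrArg List.length heq
          simpa using this
        exact (List.append_inj heq hl).1
      · -- surj on
        rintro u ⟨⟨hSt, hXu, hYu, hne, hint⟩, hlen1⟩
        have hupos : 1 ≤ u.length := List.length_pos_iff.mpr hne
        have hlen2 : 2 ≤ u.length := by omega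
        set v := u.dropLast with hv
        set st := u.getLast hne with hst
        have hvu : v ++ [st] = u := List.dropLast_append_getLast hne
        have hlv : v.length = u.length - 1 := List.length_dropLast
        have hstS : st ∈ S := hSt st (List.getLast_mem hne)
        have hXsum : Xt v + st.1 = k := by
          rw [← hvu, Xt_append, Xt_singleton] at hXu
          exact hXu
        have hYsum : Yt v + st.2 = k := by
          rw [← hvu, Yt_append, Yt_singleton] at hYu
          exact hYu
        have hvlt : Xt v < Yt v := by
          have h1 : 1 ≤ v.length := by omega
          have h2 : v.length < u.length := by omega
          have := hint v.length h1 h2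
          rw [← hvu, xPart_append_left v _ le_rfl, yPart_append_left v _ le_rfl,
            xPart_length, yPart_length] at this
          exact this
        have hst2 : st.2 = 0 := by
          by_contra hpos
          have := hslope st.1 st.2 hstS (by omega)
          omega
        have hst1 : st.1 = Yt v - Xt v := by omega
        refine ⟨v, ⟨⟨?_, ?_, ?_⟩, ?_⟩, ?_⟩
        · intro st' hst'
          exact hSt st' ((List.dropLast_sublist u).subset hst')
        · omega
        · intro i hi1 hi2
          have := hint i hi1 (by omega)
          rw [← hvu, xPart_append_left v _ hi2, yPart_append_left v _ hi2] at this
          exact this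
        · rw [← List.length_pos_iff]
          omega
        · show v ++ [(Yt v - Xt v, 0)] = u
          rw [show (Yt v - Xt v, 0) = st from (Prod.ext hst1 hst2).symm, hvu]
    have hfg : ∀ v ∈ UpNe S k, ρ * Wt w v = Wt w (v ++ [(Yt v - Xt v, 0)]) := by
      intro v hv
      have hlt := Xt_lt_Yt_of_UpNe hv
      rw [Wt_append, Wt_singleton, hw _ (by omega), mul_comm]
    have heq := finsum_mem_eq_of_bijOn (f := fun v => ρ * Wt w v) (g := Wt w)
      (fun v => v ++ [(Yt v - Xt v, 0)]) hbij hfg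
    rw [← heq, finsum_mem_eq_finite_toFinset_sum _ (UpNe_finite h00 k),
      finsum_mem_eq_finite_toFinset_sum _ (UpNe_finite h00 k), Finset.mul_sum]

end G4c



section G2
variable {S : Set (ℕ × ℕ)} {A : Type*} [CommRing A]

lemma G2 (h00 : (0, 0) ∉ S) (hhoriz : ∀ a : ℕ, 1 ≤ a → (a, 0) ∈ S)
    (hslope : ∀ a b : ℕ, (a, b) ∈ S → 0 < b → a ≤ b)
    (w : ℕ × ℕ → A) (ρ : A) (hw : ∀ a : ℕ, 1 ≤ a → w (a, 0) = ρ)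
    {Q : ℕ → ℕ → Prop} (hQs : ∀ c x y, Q (c + x) (c + y) ↔ Q x y)
    (hQb : ∀ x m, Q x m → x ≤ m) (hQ2 : ∀ x y, x < y → Q x y) :
    ser w (fun m => {p ∈ PrQ S Q m | p ≠ []}) =
      ser w (UpNe S) + PowerSeries.C (R := A) ρ * (ser w (UpS S) * serM w (MQ S Q)) := by
  classical
  have key : ∀ (s r : List (ℕ × ℕ)) (a : ℕ), UpP s → 1 ≤ a →
      (∀ i, 1 ≤ i → i ≤ s.length →
        xPart (s ++ (Yt s - Xt s + a, 0) :: r) i < yPart (s ++ (Yt s - Xt s + a, 0) :: r) i)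
      ∧ yPart (s ++ (Yt s - Xt s + a, 0) :: r) (s.length + 1) <
        xPart (s ++ (Yt s - Xt s + a, 0) :: r) (s.length + 1) := by
    intro s r a hUp ha
    have hle : Xt s ≤ Yt s := Xt_le_Yt_of_UpP hUp
    constructor
    · intro i h1 h2
      rw [xPart_append_left _ _ h2, yPart_append_left _ _ h2]
      exact hUp i h1 h2
    · rw [xPart_append_right, yPart_append_right, xPart_cons_one, yPart_cons_one]
      simp only
      omega
  ext m
  rw [map_add, PowerSeries.coeff_C_mul, PowerSeries.coeff_mul]
  simp only [ser, serM, PowerSeries.coeff_mk]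
  have hsub : UpNe S m ⊆ {p ∈ PrQ S Q m | p ≠ []} := by
    rintro p ⟨⟨hSt, hY, hUp⟩, hne⟩
    have hlt : Xt p < Yt p := Xt_lt_Yt_of_UpNe ⟨⟨hSt, hY, hUp⟩, hne⟩
    refine ⟨⟨⟨hSt, hY, ?_⟩, ?_⟩, hne⟩
    · rw [← hY]; exact hQ2 _ _ hlt
    · intro i h1 h2 hc
      exact absurd hc.2 (Nat.ne_of_lt (hUp i h1 h2))
  set D := {p ∈ PrQ S Q m | p ≠ [] ∧ ¬ UpP p} with hD
  have hunion : {p ∈ PrQ S Q m | p ≠ []} = UpNe S m ∪ D := by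
    ext p
    constructor
    · rintro ⟨hp, hne⟩
      by_cases hUp : UpP p
      · left; exact ⟨⟨hp.1.1, hp.1.2.1, hUp⟩, hne⟩
      · right; exact ⟨hp, hne, hUp⟩
    · rintro (h | h)
      · exact hsub h
      · exact ⟨h.1, h.2.1⟩
  have hdisj : Disjoint (UpNe S m) D := by
    rw [Set.disjoint_left]
    rintro p ⟨⟨_, _, hUp⟩, _⟩ ⟨_, _, hnup⟩
    exact hnup hUp
  have hfD : D.Finite := (PrQ_finite h00 hQb m).subset fun p h => h.1
  rw [hunion, finsum_mem_union hdisj (UpNe_finite h00 m) hfD]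
  congr 1
  rw [finsum_mem_eq_finite_toFinset_sum _ hfD]
  have hRHS : ∀ kl : ℕ × ℕ,
      (∑ᶠ q ∈ UpS S kl.1, Wt w q) * (∑ᶠ z ∈ MQ S Q kl.2, Wt w z.2) =
      ∑ x ∈ (UpS_finite h00 kl.1).toFinset ×ˢ (MQ_finite h00 hQb kl.2).toFinset,
        Wt w x.1 * Wt w x.2.2 := by
    intro kl
    rw [finsum_mem_eq_finite_toFinset_sum _ (UpS_finite h00 kl.1),
      finsum_mem_eq_finite_toFinset_sum _ (MQ_finite h00 hQb kl.2), Finset.sum_mul_sum]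
    rw [Finset.sum_product]
  calc ∑ p ∈ hfD.toFinset, Wt w p
      = ∑ x ∈ (Finset.HasAntidiagonal.antidiagonal m).sigma
          (fun kl => (UpS_finite h00 kl.1).toFinset ×ˢ (MQ_finite h00 hQb kl.2).toFinset),
          ρ * (Wt w x.2.1 * Wt w x.2.2.2) := by
        refine (Finset.sum_bij
          (fun x _ => x.2.1 ++ (Yt x.2.1 - Xt x.2.1 + x.2.2.1, 0) :: x.2.2.2)
          ?_ ?_ ?_ ?_).symm
        · -- maps into D
          rintro ⟨⟨k, l⟩, s, a, r⟩ hx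
          simp only [Finset.mem_sigma, Finset.mem_product, Set.Finite.mem_toFinset,
            Finset.HasAntidiagonal.mem_antidiagonal] at hx
          simp only [UpS, MQ, Set.mem_setOf_eq] at hx
          obtain ⟨hkl, ⟨hsSt, hsY, hsUp⟩, ha, hrSt, hrY, hrQ⟩ := hx
          rw [Set.Finite.mem_toFinset]
          show s ++ (Yt s - Xt s + a, 0) :: r ∈ D
          obtain ⟨hbelow, habove⟩ := key s r a hsUp ha
          have hsle : Xt s ≤ Yt s := Xt_le_Yt_of_UpP hsUp
          have hplen : (s ++ (Yt s - Xt s + a, 0) :: r).length = s.length + 1 + r.length := by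
            rw [List.length_append, List.length_cons]; omega
          have heX : Xt (s ++ (Yt s - Xt s + a, 0) :: r) = Yt s + (Xt r + a) := by
            rw [Xt_append, Xt_cons]; simp only; omega
          have heY : Yt (s ++ (Yt s - Xt s + a, 0) :: r) = Yt s + Yt r := by
            rw [Yt_append, Yt_cons]; simp only; omega
          refine ⟨⟨⟨?_, ?_, ?_⟩, ?_⟩, ?_, ?_⟩
          · intro st' hst'
            rcases List.mem_append.mp hst' with h | h
            · exact hsSt st' h
            · rcases List.mem_cons.mp h with h' | h'
              · rw [h']; exact hhoriz _ (by omega)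
              · exact hrSt st' h'
          · rw [heY]; omega
          · rw [heX, show m = Yt s + Yt r by omega]
            exact (hQs _ _ _).mpr (by rw [hrY]; exact hrQ)
          · intro i h1 h2 hc
            rcases le_or_gt i s.length with h | h
            · exact absurd hc.2 (Nat.ne_of_lt (hbelow i h1 h))
            · have := hc.1 (s.length + 1) (by omega)
              omega
          · intro hnil
            have := congrArg List.length hnil
            rw [hplen] at this
            simp at this
          · intro hUp
            have := hUp (s.length + 1) (by omega) (by omega)
            omega
        · -- injective
          rintro ⟨⟨k, l⟩, s, a, r⟩ hx ⟨⟨k', l'⟩, s', a', r'⟩ hx' heq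
          simp only [Finset.mem_sigma, Finset.mem_product, Set.Finite.mem_toFinset,
            Finset.HasAntidiagonal.mem_antidiagonal] at hx hx'
          simp only [UpS, MQ, Set.mem_setOf_eq] at hx hx'
          obtain ⟨hkl, ⟨hsSt, hsY, hsUp⟩, ha, hrSt, hrY, hrQ⟩ := hx
          obtain ⟨hkl', ⟨hsSt', hsY', hsUp'⟩, ha', hrSt', hrY', hrQ'⟩ := hx'
          obtain ⟨hbelow, habove⟩ := key s r a hsUp ha
          obtain ⟨hbelow', habove'⟩ := key s' r' a' hsUp' ha'
          have heq2 : s ++ (Yt s - Xt s + a, 0) :: r = s' ++ (Yt s' - Xt s' + a', 0) :: r' := heq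
          rw [heq2] at hbelow habove
          have hlen : s.length = s'.length := by
            rcases lt_trichotomy s.length s'.length with h | h | h
            · have h1 := hbelow' (s.length + 1) (by omega) (by omega)
              omega
            · exact h
            · have h1 := hbelow (s'.length + 1) (by omega) (by omega)
              omega
          have hs : s = s' := by
            have e1 : (s ++ (Yt s - Xt s + a, 0) :: r).take s.length = s := List.take_left
            have e2 : (s' ++ (Yt s' - Xt s' + a', 0) :: r').take s'.length = s' :=
              List.take_left
            rw [← e1, ← e2, heq2, hlen]
          subst hs
          have htail := List.append_cancel_left heq2
          rw [List.cons.injEq] at htail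
          obtain ⟨hhead, hr⟩ := htail
          have haa : a = a' := by
            have := congrArg Prod.fst hhead
            simp only at this
            omega
          subst hr; subst haa
          simp only [Sigma.mk.inj_iff, Prod.mk.injEq, heq_eq_eq, and_true, true_and]
          omega
        · -- surjective
          intro p hp
          rw [Set.Finite.mem_toFinset] at hp
          obtain ⟨⟨⟨hSt, hY, hQp⟩, hPr⟩, hne, hnup⟩ := hp
          rw [UpP] at hnup
          push_neg at hnup
          obtain ⟨i0, hi0⟩ := hnup
          have hexR : ∃ i, 1 ≤ i ∧ i ≤ p.length ∧ yPart p i ≤ xPart p i :=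
            ⟨i0, hi0.1, hi0.2.1, hi0.2.2⟩
          set τ := Nat.find hexR with hτdef
          obtain ⟨hτ1, hτle, hτge⟩ := Nat.find_spec hexR
          have hτmin : ∀ i, 1 ≤ i → i < τ → xPart p i < yPart p i := by
            intro i h1 h2
            have := Nat.find_min hexR h2
            push_neg at this
            exact this h1 (by omega)
          have hstrict : yPart p τ < xPart p τ := by
            by_contra hc
            push_neg at hc
            have heqd : xPart p τ = yPart p τ := le_antisymm hc hτge
            refine hPr τ hτ1 hτle ⟨?_, heqd⟩
            intro k hk
            rcases Nat.eq_zero_or_pos k with rfl | hk1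
            · rw [xPart_zero, yPart_zero]
            rcases eq_or_lt_of_le hk with rfl | hlt
            · exact le_of_eq heqd
            · exact le_of_lt (hτmin k hk1 hlt)
          have hLlt : τ - 1 < p.length := by omega
          set L := τ - 1 with hLdef
          set st := p[L]'hLlt with hstdef
          have hsplit : p = p.take L ++ st :: p.drop τ := by
            conv_lhs => rw [← List.take_append_drop L p]
            congr 1
            rw [List.drop_eq_getElem_cons hLlt, show L + 1 = τ by omega]
          set s := p.take L with hsdef
          set r := p.drop τ with hrdef
          have hls : s.length = L := by rw [hsdef, List.length_take]; omega
          have hXs : Xt s = xPart p L := by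
            rw [← xPart_length s, hls, hsdef, xPart_take, min_self]
          have hYs : Yt s = yPart p L := by
            rw [← yPart_length s, hls, hsdef, yPart_take, min_self]
          have hsucx : xPart p τ = xPart p L + st.1 := by
            rw [show τ = L + 1 by omega]
            exact xPart_succ p hLlt
          have hsucy : yPart p τ = yPart p L + st.2 := by
            rw [show τ = L + 1 by omega]
            exact yPart_succ p hLlt
          have hxLleyL : xPart p L ≤ yPart p L := by
            rcases Nat.eq_zero_or_pos L with h0 | hpos
            · rw [h0, xPart_zero, yPart_zero]
            · exact le_of_lt (hτmin L hpos (by omega))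
          have hstS : st ∈ S := hSt st (by rw [hstdef]; exact List.getElem_mem _)
          have hst2 : st.2 = 0 := by
            by_contra hpos
            have := hslope st.1 st.2 hstS (by omega)
            omega
          set a := st.1 - (Yt s - Xt s) with hadef
          have ha1 : 1 ≤ a := by rw [hadef, hXs, hYs]; omega
          have hsteq : st = (Yt s - Xt s + a, 0) := by
            refine Prod.ext ?_ hst2
            simp only
            rw [hadef, hXs, hYs]
            omega
          have heXp : Xt p = Yt s + (Xt r + a) := by
            conv_lhs => rw [hsplit]
            rw [Xt_append, Xt_cons, hXs, hYs, hadef, hXs, hYs]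
            omega
          have heYp : Yt p = Yt s + Yt r := by
            conv_lhs => rw [hsplit]
            rw [Yt_append, Yt_cons, hst2]
            omega
          refine ⟨⟨⟨Yt s, Yt r⟩, s, a, r⟩, ?_, ?_⟩
          · simp only [Finset.mem_sigma, Finset.mem_product, Set.Finite.mem_toFinset,
              Finset.HasAntidiagonal.mem_antidiagonal]
            refine ⟨by omega, ⟨?_, rfl, ?_⟩, ha1, ?_, rfl, ?_⟩
            · exact fun st' h => hSt st' (List.mem_of_mem_take h)
            · intro i h1 h2
              rw [hls] at h2
              rw [hsdef, xPart_prefix p h2, yPart_prefix p h2]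
              exact hτmin i h1 (by omega)
            · exact fun st' h => hSt st' (List.mem_of_mem_drop h)
            · have := hQp
              rw [heXp, show m = Yt s + Yt r by omega] at this
              exact (hQs _ _ _).mp this
          · show s ++ (Yt s - Xt s + a, 0) :: r = p
            rw [← hsteq]
            exact hsplit.symm
        · -- weights
          rintro ⟨⟨k, l⟩, s, a, r⟩ hx
          simp only [Finset.mem_sigma, Finset.mem_product, Set.Finite.mem_toFinset,
            Finset.HasAntidiagonal.mem_antidiagonal] at hx
          simp only [UpS, MQ, Set.mem_setOf_eq] at hx
          obtain ⟨hkl, hsmem, ha, hrmem⟩ := hx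
          show ρ * (Wt w s * Wt w r) = Wt w (s ++ (Yt s - Xt s + a, 0) :: r)
          rw [Wt_append, Wt_cons, hw _ (by omega)]
          ring
      _ = ρ * ∑ kl ∈ Finset.HasAntidiagonal.antidiagonal m,
            (∑ᶠ q ∈ UpS S kl.1, Wt w q) * (∑ᶠ z ∈ MQ S Q kl.2, Wt w z.2) := by
        rw [Finset.sum_sigma, Finset.mul_sum]
        refine Finset.sum_congr rfl fun kl _ => ?_
        rw [hRHS kl, Finset.mul_sum]

end G2



section Bridges
variable {S : Set (ℕ × ℕ)} {A : Type*} [CommRing A]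

lemma Xt_nil : Xt ([] : List (ℕ × ℕ)) = 0 := rfl
lemma Yt_nil : Yt ([] : List (ℕ × ℕ)) = 0 := rfl

lemma IsPath_finite (h00 : (0, 0) ∉ S) (j n : ℕ) : {p : List (ℕ × ℕ) | IsPath S j n p}.Finite := by
  apply (finite_master h00 (j + n)).subset
  rintro p ⟨hSt, hx, hy⟩
  rw [xPart_length] at hx; rw [yPart_length] at hy
  exact ⟨hSt, by omega⟩

lemma bridge (h00 : (0, 0) ∉ S) (w : ℕ × ℕ → A)
    {Q : ℕ → ℕ → Prop} (hQb : ∀ x m, Q x m → x ≤ m)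
    (R : ℕ → Finset ℕ) (hR : ∀ n j, j ∈ R n ↔ Q j n) :
    (PowerSeries.mk fun n => ∑ j ∈ R n,
      ∑ᶠ p ∈ {p : List (ℕ × ℕ) | IsPath S j n p}, Wt w p) = ser w (WQ S Q) := by
  classical
  ext n
  simp only [ser, PowerSeries.coeff_mk]
  rw [finsum_mem_eq_finite_toFinset_sum _ (WQ_finite h00 hQb n)]
  have hset : (WQ_finite h00 hQb n).toFinset =
      (R n).biUnion (fun j => (IsPath_finite h00 j n).toFinset) := by
    ext p
    simp only [Set.Finite.mem_toFinset, Finset.mem_biUnion]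
    constructor
    · rintro ⟨hSt, hY, hQ⟩
      exact ⟨Xt p, (hR n (Xt p)).mpr (hY ▸ hQ),
        ⟨hSt, by rw [xPart_length], by rw [yPart_length]; exact hY⟩⟩
    · rintro ⟨j, hj, hSt, hx, hy⟩
      rw [xPart_length] at hx; rw [yPart_length] at hy
      exact ⟨hSt, hy, by rw [hx, ← hy]; exact hy ▸ ((hR n j).mp hj)⟩
  rw [hset, Finset.sum_biUnion]
  · refine (Finset.sum_congr rfl fun j _ => ?_).symm
    rw [finsum_mem_eq_finite_toFinset_sum _ (IsPath_finite h00 j n)]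
  · intro j _ j' _ hne
    simp only [Function.onFun]
    rw [Finset.disjoint_left]
    intro p hp hp'
    rw [Set.Finite.mem_toFinset] at hp hp'
    obtain ⟨_, hx, _⟩ := hp
    obtain ⟨_, hx', _⟩ := hp'
    exact hne (hx ▸ hx' ▸ rfl)

lemma G3 (h00 : (0, 0) ∉ S) (w : ℕ × ℕ → A) :
    serM w (MQ S (· ≤ ·)) = serM w (MQ S (· < ·)) + ser w (WQ S (· < ·)) := by
  classical
  have hQbLe : ∀ x m : ℕ, x ≤ m → x ≤ m := fun _ _ h => h
  have hQbLt : ∀ x m : ℕ, x < m → x ≤ m := fun _ _ h => le_of_lt h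
  ext l
  rw [map_add]
  simp only [serM, ser, PowerSeries.coeff_mk]
  have hunion : MQ S (· ≤ ·) l = MQ S (· < ·) l ∪
      {z : ℕ × List (ℕ × ℕ) | 1 ≤ z.1 ∧ StS S z.2 ∧ Yt z.2 = l ∧ Xt z.2 + z.1 = l} := by
    ext z
    constructor
    · rintro ⟨h1, h2, h3, h4⟩
      rcases lt_or_eq_of_le h4 with h | h
      · exact Or.inl ⟨h1, h2, h3, h⟩
      · exact Or.inr ⟨h1, h2, h3, h⟩
    · rintro (⟨h1, h2, h3, h4⟩ | ⟨h1, h2, h3, h4⟩)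
      · exact ⟨h1, h2, h3, le_of_lt h4⟩
      · exact ⟨h1, h2, h3, le_of_eq h4⟩
  have hdisj : Disjoint (MQ S (· < ·) l)
      {z : ℕ × List (ℕ × ℕ) | 1 ≤ z.1 ∧ StS S z.2 ∧ Yt z.2 = l ∧ Xt z.2 + z.1 = l} := by
    rw [Set.disjoint_left]
    rintro z ⟨_, _, _, h4⟩ ⟨_, _, _, h4'⟩
    omega
  have hfE : {z : ℕ × List (ℕ × ℕ) | 1 ≤ z.1 ∧ StS S z.2 ∧ Yt z.2 = l ∧ Xt z.2 + z.1 = l}.Finite := by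
    apply (MQ_finite h00 hQbLe l).subset
    rintro z ⟨h1, h2, h3, h4⟩
    exact ⟨h1, h2, h3, le_of_eq h4⟩
  rw [hunion, finsum_mem_union hdisj (MQ_finite h00 hQbLt l) hfE]
  congr 1
  have hbij : Set.BijOn (fun r : List (ℕ × ℕ) => ((l - Xt r, r) : ℕ × List (ℕ × ℕ)))
      (WQ S (· < ·) l)
      {z : ℕ × List (ℕ × ℕ) | 1 ≤ z.1 ∧ StS S z.2 ∧ Yt z.2 = l ∧ Xt z.2 + z.1 = l} := by
    refine ⟨?_, ?_, ?_⟩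
    · rintro r ⟨h1, h2, h3⟩
      show 1 ≤ l - Xt r ∧ StS S r ∧ Yt r = l ∧ Xt r + (l - Xt r) = l
      exact ⟨by omega, h1, h2, by omega⟩
    · rintro r _ r' _ heq
      exact congrArg Prod.snd heq
    · rintro ⟨a, r⟩ ⟨h1, h2, h3, h4⟩
      have h1' : 1 ≤ a := h1
      have h4' : Xt r + a = l := h4
      refine ⟨r, ⟨h2, h3, by omega⟩, ?_⟩
      show ((l - Xt r, r) : ℕ × List (ℕ × ℕ)) = (a, r)
      rw [Prod.mk.injEq]
      exact ⟨by omega, rfl⟩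
  exact (finsum_mem_eq_of_bijOn _ hbij (fun r _ => rfl)).symm

lemma UpS_zero (h00 : (0, 0) ∉ S) : UpS S 0 = {[]} := by
  ext p
  constructor
  · rintro ⟨hSt, hY, hUp⟩
    by_contra hne
    have h1 : 1 ≤ p.length := List.length_pos_iff.mpr hne
    have := hUp p.length h1 le_rfl
    rw [xPart_length, yPart_length, hY] at this
    omega
  · rintro rfl
    exact ⟨fun st hst => absurd hst List.not_mem_nil, rfl, fun i h1 h2 => by
      simp only [List.length_nil] at h2; omega⟩

lemma nil_notMem_UpS {n : ℕ} (hn : 0 < n) : [] ∉ UpS S n := by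
  rintro ⟨_, hY, _⟩
  rw [Yt_nil] at hY
  omega

lemma PrQle_zero (h00 : (0, 0) ∉ S) : PrQ S (· ≤ ·) 0 = {[]} := by
  ext p
  constructor
  · rintro ⟨⟨hSt, hY, hQ⟩, _⟩
    exact nil_of_tot_eq_zero h00 hSt (by omega) hY
  · rintro rfl
    refine ⟨⟨fun st hst => absurd hst List.not_mem_nil, rfl, le_rfl⟩, ?_⟩
    intro i h1 h2
    simp only [List.length_nil] at h2
    omega
lemma nil_notMem_PrQle {n : ℕ} (hn : 0 < n) : [] ∉ PrQ S (· ≤ ·) n := by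
  rintro ⟨⟨_, hY, _⟩, _⟩
  rw [Yt_nil] at hY
  omega

lemma PrQlt_ne (n : ℕ) : {p ∈ PrQ S (· < ·) n | p ≠ []} = PrQ S (· < ·) n := by
  ext p
  simp only [Set.mem_setOf_eq, and_iff_left_iff_imp]
  rintro ⟨⟨_, hY, hQ⟩, _⟩ rfl
  rw [Yt_nil] at hY
  rw [Xt_nil] at hQ
  omega

end Bridges


end SP14

open Classical in
theorem stmt14 (A : Type*) [CommRing A]
    (S : Set (ℕ × ℕ)) (h00 : (0, 0) ∉ S)
    (hhoriz : ∀ a : ℕ, 1 ≤ a → (a, 0) ∈ S)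
    (hslope : ∀ a b : ℕ, (a, b) ∈ S → 0 < b → a ≤ b)
    (w : ℕ × ℕ → A) (ρ : A) (hw : ∀ a : ℕ, 1 ≤ a → w (a, 0) = ρ)
    (Pw Tw E0w E1w : PowerSeries A)
    (hP : Pw = PowerSeries.mk fun n =>
      ∑ᶠ p ∈ {p : List (ℕ × ℕ) | IsPath S n n p ∧ IsCatalan p}, (p.map w).prod)
    (hT : Tw = PowerSeries.mk fun a => if 1 ≤ a ∧ (a, a) ∈ S then w (a, a) else 0)
    (hE0 : E0w = PowerSeries.mk fun n => ∑ j ∈ Finset.range (n + 1),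
      ∑ᶠ p ∈ {p : List (ℕ × ℕ) | IsPath S j n p}, (p.map w).prod)
    (hE1 : E1w = PowerSeries.mk fun n => ∑ j ∈ Finset.range n,
      ∑ᶠ p ∈ {p : List (ℕ × ℕ) | IsPath S j n p}, (p.map w).prod) :
    Pw * (1 + (1 + PowerSeries.C (R := A) ρ - Tw) * E1w) = E0w := by
  open SP14 in
  classical
  have hQsLe : ∀ c x y : ℕ, c + x ≤ c + y ↔ x ≤ y := fun c x y => by omega
  have hQbLe : ∀ x m : ℕ, x ≤ m → x ≤ m := fun _ _ h => h
  have hQ2Le : ∀ x y : ℕ, x < y → x ≤ y := fun _ _ h => le_of_lt h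
  have hQsLt : ∀ c x y : ℕ, c + x < c + y ↔ x < y := fun c x y => by omega
  have hQbLt : ∀ x m : ℕ, x < m → x ≤ m := fun _ _ h => le_of_lt h
  have hQ2Lt : ∀ x y : ℕ, x < y → x < y := fun _ _ h => h
  have eP : Pw = ser w (CatD S) := hP
  have eB : E0w = ser w (WQ S (· ≤ ·)) := by
    rw [hE0]
    exact bridge (Q := (· ≤ ·)) h00 w hQbLe (fun n => Finset.range (n + 1))
      (fun n j => by simp [Finset.mem_range, Nat.lt_succ_iff])
  have eC : E1w = ser w (WQ S (· < ·)) := by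
    rw [hE1]
    exact bridge (Q := (· < ·)) h00 w hQbLt (fun n => Finset.range n)
      (fun n j => by simp [Finset.mem_range])
  have e1 : ser w (WQ S (· ≤ ·)) = ser w (CatD S) *
      (1 + (ser w (UpNe S) +
        PowerSeries.C (R := A) ρ * (ser w (UpS S) * serM w (MQ S (· ≤ ·))))) := by
    rw [G1 (Q := (· ≤ ·)) h00 w hQsLe hQbLe]
    congr 1
    rw [ser_eq_one_add w (PrQle_zero h00) (fun n hn => nil_notMem_PrQle hn)]
    congr 1
    exact G2 (Q := (· ≤ ·)) h00 hhoriz hslope w ρ hw hQsLe hQbLe hQ2Le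
  have e2 : ser w (WQ S (· < ·)) = ser w (CatD S) *
      (ser w (UpNe S) +
        PowerSeries.C (R := A) ρ * (ser w (UpS S) * serM w (MQ S (· < ·)))) := by
    rw [G1 (Q := (· < ·)) h00 w hQsLt hQbLt]
    congr 1
    have hne : (fun n => {p ∈ PrQ S (· < ·) n | p ≠ []}) = PrQ S (· < ·) :=
      funext fun n => PrQlt_ne n
    rw [← hne]
    exact G2 (Q := (· < ·)) h00 hhoriz hslope w ρ hw hQsLt hQbLt hQ2Lt
  have e3 : serM w (MQ S (· ≤ ·)) = serM w (MQ S (· < ·)) + ser w (WQ S (· < ·)) :=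
    G3 h00 w
  have e4 : ser w (UpS S) = 1 + ser w (UpNe S) := by
    rw [ser_eq_one_add w (UpS_zero h00) (fun n hn => nil_notMem_UpS hn)]
    rfl
  have e5 : ser w (CatD S) = 1 +
      ((PowerSeries.mk fun a => if 1 ≤ a ∧ (a, a) ∈ S then w (a, a) else 0) +
        PowerSeries.C (R := A) ρ * ser w (UpNe S)) * ser w (CatD S) := by
    conv_lhs => rw [ser_eq_one_add w (CatD_zero h00) (fun n hn => nil_notMem_CatD hn)]
    rw [G4b h00 w, G4c h00 hhoriz hslope w ρ hw]
  rw [eP, hT, eB, eC]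
  linear_combination (ser w (WQ S (· < ·))) * e5 - e1 + e2 -
    (PowerSeries.C (R := A) ρ) * (ser w (CatD S)) * (ser w (UpS S)) * e3 -
    (PowerSeries.C (R := A) ρ) * (ser w (CatD S)) * (ser w (WQ S (· < ·))) * e4
end

section
/- Let A be a commutative ring, let S be a step set whose only horizontal step is (1,0) (i.e. (a,0) ∈ S if and only if a = 1) and such that every (a,b) ∈ S with b > 0 satisfies a ≤ b, and let w : S → A be a weight function with w((1,0)) = ρ. Let P^w(t) = Σ_{n≥0} p^w_n tⁿ, let D_0^w(t) = Σ_{n≥0} a^w_{n,n} tⁿ, and let D_1^w(t) = Σ_{n≥1} a^w_{n−1,n} tⁿ. Then in A⟦t⟧: P^w(t) · (1 + ρ·D_1^w(t)) = D_0^w(t). -/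
/- ### Auxiliary lemmas -/

lemma stmt15_take_sum_le (l : List ℕ) (n : ℕ) : (l.take n).sum ≤ l.sum := by
  conv_rhs => rw [← List.take_append_drop n l, List.sum_append]
  exact Nat.le_add_right _ _

lemma stmt15_xPart_length (p : List (ℕ × ℕ)) : xPart p p.length = (p.map Prod.fst).sum := by
  simp [xPart]

lemma stmt15_yPart_length (p : List (ℕ × ℕ)) : yPart p p.length = (p.map Prod.snd).sum := by
  simp [yPart]

lemma stmt15_xPart_eq (p : List (ℕ × ℕ)) (j : ℕ) :
    xPart p j = ((p.map Prod.fst).take j).sum := by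
  simp [xPart, List.map_take]

lemma stmt15_yPart_eq (p : List (ℕ × ℕ)) (j : ℕ) :
    yPart p j = ((p.map Prod.snd).take j).sum := by
  simp [yPart, List.map_take]

lemma stmt15_xPart_zero (p : List (ℕ × ℕ)) : xPart p 0 = 0 := by simp [xPart]

lemma stmt15_xPart_succ (p : List (ℕ × ℕ)) (i : ℕ) (h : i < p.length) :
    xPart p (i + 1) = xPart p i + p[i].1 := by
  rw [stmt15_xPart_eq, stmt15_xPart_eq, List.sum_take_succ _ i (by simpa using h),
    List.getElem_map]

lemma stmt15_yPart_succ (p : List (ℕ × ℕ)) (i : ℕ) (h : i < p.length) :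
    yPart p (i + 1) = yPart p i + p[i].2 := by
  rw [stmt15_yPart_eq, stmt15_yPart_eq, List.sum_take_succ _ i (by simpa using h),
    List.getElem_map]

lemma stmt15_xPart_take (p : List (ℕ × ℕ)) (j i : ℕ) (h : i ≤ j) :
    xPart (p.take j) i = xPart p i := by
  simp [xPart, List.take_take, Nat.min_eq_left h]

lemma stmt15_yPart_take (p : List (ℕ × ℕ)) (j i : ℕ) (h : i ≤ j) :
    yPart (p.take j) i = yPart p i := by
  simp [yPart, List.take_take, Nat.min_eq_left h]

lemma stmt15_xPart_append (q u : List (ℕ × ℕ)) (j : ℕ) (h : j ≤ q.length) :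
    xPart (q ++ u) j = xPart q j := by
  simp [xPart, List.take_append_of_le_length h]

lemma stmt15_yPart_append (q u : List (ℕ × ℕ)) (j : ℕ) (h : j ≤ q.length) :
    yPart (q ++ u) j = yPart q j := by
  simp [yPart, List.take_append_of_le_length h]

lemma stmt15_xPart_append_succ (q u : List (ℕ × ℕ)) (s : ℕ × ℕ) :
    xPart (q ++ s :: u) (q.length + 1) = xPart q q.length + s.1 := by
  rw [xPart, List.take_append]
  simp [stmt15_xPart_length, List.take_of_length_le (show (q.map Prod.fst).length ≤ q.length + 1 by simp)]

lemma stmt15_yPart_append_succ (q u : List (ℕ × ℕ)) (s : ℕ × ℕ) :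
    yPart (q ++ s :: u) (q.length + 1) = yPart q q.length + s.2 := by
  rw [yPart, List.take_append]
  simp [stmt15_yPart_length, List.take_of_length_le (show (q.map Prod.snd).length ≤ q.length + 1 by simp)]

/-- The set of `S`-paths from `(0,0)` to `(n,m)` is finite. -/
lemma stmt15_path_finite (S : Set (ℕ × ℕ)) (h00 : (0, 0) ∉ S) (a b : ℕ) :
    {p : List (ℕ × ℕ) | IsPath S a b p}.Finite := by
  classical
  have hT : (Set.Iic a ×ˢ Set.Iic b : Set (ℕ × ℕ)).Finite :=
    (Set.finite_Iic a).prod (Set.finite_Iic b)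
  haveI := hT.to_subtype
  have hL : {l : List (↥(Set.Iic a ×ˢ Set.Iic b : Set (ℕ × ℕ))) | l.length ≤ a + b}.Finite :=
    List.finite_length_le _ _
  refine ((hL.image (List.map Subtype.val))).subset ?_
  rintro p ⟨hmem, hx, hy⟩
  rw [stmt15_xPart_length] at hx
  rw [stmt15_yPart_length] at hy
  have hfst : ∀ st ∈ p, st.1 ≤ a := by
    intro st hst
    have h1 : st.1 ∈ p.map Prod.fst := List.mem_map_of_mem hst
    have := List.single_le_sum (l := p.map Prod.fst) (fun x _ => Nat.zero_le x) _ h1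
    omega
  have hsnd : ∀ st ∈ p, st.2 ≤ b := by
    intro st hst
    have h1 : st.2 ∈ p.map Prod.snd := List.mem_map_of_mem hst
    have := List.single_le_sum (l := p.map Prod.snd) (fun x _ => Nat.zero_le x) _ h1
    omega
  have hlen : p.length ≤ a + b := by
    have h1 : (p.map (fun _ => (1 : ℕ))).sum ≤ (p.map (fun st => st.1 + st.2)).sum := by
      refine List.sum_le_sum ?_
      intro st hst
      have : st ∈ S := hmem st hst
      rcases Nat.eq_zero_or_pos (st.1 + st.2) with h | h
      · exfalso
        have h1 : st.1 = 0 := by omega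
        have h2 : st.2 = 0 := by omega
        have : st = ((0 : ℕ), (0 : ℕ)) := Prod.ext h1 h2
        exact h00 (this ▸ hmem st hst)
      · omega
    have h2 : (p.map (fun _ => (1 : ℕ))).sum = p.length := by
      simp
    have h3 : (p.map (fun st => st.1 + st.2)).sum
        = (p.map Prod.fst).sum + (p.map Prod.snd).sum := by
      induction p with
      | nil => simp
      | cons hd tl ih => simp [ih]; ring
    omega
  refine ⟨p.attach.map (fun x => (⟨x.1, ?_⟩ : ↥(Set.Iic a ×ˢ Set.Iic b : Set (ℕ × ℕ)))), ?_, ?_⟩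
  · exact Set.mem_prod.2 ⟨hfst x.1 x.2, hsnd x.1 x.2⟩
  · rw [Set.mem_setOf_eq, List.length_map, List.length_attach]; exact hlen
  · rw [List.map_map]
    simp [Function.comp_def, List.attach_map_subtype_val]

/-- Finset of `S`-paths. -/
noncomputable def stmt15_pathFinset (S : Set (ℕ × ℕ)) (h00 : (0, 0) ∉ S) (a b : ℕ) :
    Finset (List (ℕ × ℕ)) := (stmt15_path_finite S h00 a b).toFinset

/-- Finset of Catalan `S`-paths. -/
noncomputable def stmt15_catFinset (S : Set (ℕ × ℕ)) (h00 : (0, 0) ∉ S) (a : ℕ) :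
    Finset (List (ℕ × ℕ)) :=
  ((stmt15_path_finite S h00 a a).subset
    (t := {p : List (ℕ × ℕ) | IsPath S a a p ∧ IsCatalan p}) (fun _ hq => hq.1)).toFinset

lemma stmt15_mem_pathFinset {S : Set (ℕ × ℕ)} {h00 : (0, 0) ∉ S} {a b : ℕ}
    {p : List (ℕ × ℕ)} : p ∈ stmt15_pathFinset S h00 a b ↔ IsPath S a b p :=
  Set.Finite.mem_toFinset _

lemma stmt15_mem_catFinset {S : Set (ℕ × ℕ)} {h00 : (0, 0) ∉ S} {a : ℕ}
    {p : List (ℕ × ℕ)} : p ∈ stmt15_catFinset S h00 a ↔ IsPath S a a p ∧ IsCatalan p :=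
  Set.Finite.mem_toFinset _

lemma stmt15_finsum_path {A : Type*} [CommRing A] (S : Set (ℕ × ℕ)) (h00 : (0, 0) ∉ S)
    (f : List (ℕ × ℕ) → A) (a b : ℕ) :
    (∑ᶠ p ∈ {p : List (ℕ × ℕ) | IsPath S a b p}, f p) = ∑ p ∈ stmt15_pathFinset S h00 a b, f p :=
  finsum_mem_eq_finite_toFinset_sum _ _

lemma stmt15_finsum_cat {A : Type*} [CommRing A] (S : Set (ℕ × ℕ)) (h00 : (0, 0) ∉ S)
    (f : List (ℕ × ℕ) → A) (a : ℕ) :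
    (∑ᶠ p ∈ {p : List (ℕ × ℕ) | IsPath S a a p ∧ IsCatalan p}, f p)
      = ∑ p ∈ stmt15_catFinset S h00 a, f p :=
  finsum_mem_eq_finite_toFinset_sum _ _

/-- In the concatenation `q ++ (1,0) :: r` with `q` Catalan ending on the diagonal,
the first violation is exactly at node `q.length + 1`. -/
lemma stmt15_concat_violation (q r : List (ℕ × ℕ)) (c : ℕ)
    (hqx : xPart q q.length = c) (hqy : yPart q q.length = c) (hcat : IsCatalan q) :
    (∀ j, yPart (q ++ ((1:ℕ),(0:ℕ)) :: r) j < xPart (q ++ ((1:ℕ),(0:ℕ)) :: r) j →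
      q.length + 1 ≤ j) ∧
    yPart (q ++ ((1:ℕ),(0:ℕ)) :: r) (q.length + 1)
      < xPart (q ++ ((1:ℕ),(0:ℕ)) :: r) (q.length + 1) := by
  constructor
  · intro j hv
    by_contra h
    push_neg at h
    have hj : j ≤ q.length := by omega
    rw [stmt15_xPart_append q _ j hj, stmt15_yPart_append q _ j hj] at hv
    exact absurd (hcat j hj) (not_le.mpr hv)
  · rw [stmt15_xPart_append_succ, stmt15_yPart_append_succ, hqx, hqy]
    omega

/-- The key combinatorial decomposition. -/
lemma stmt15_key {A : Type*} [CommRing A] (S : Set (ℕ × ℕ)) (h00 : (0, 0) ∉ S)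
    (hhoriz : ∀ a : ℕ, (a, 0) ∈ S ↔ a = 1)
    (hslope : ∀ a b : ℕ, (a, b) ∈ S → 0 < b → a ≤ b)
    (w : ℕ × ℕ → A) (n : ℕ) :
    ∑ p ∈ stmt15_pathFinset S h00 n n, (p.map w).prod
      = (∑ p ∈ stmt15_catFinset S h00 n, (p.map w).prod)
        + ∑ k ∈ Finset.range n,
            (∑ q ∈ stmt15_catFinset S h00 (n - k - 1), (q.map w).prod)
            * (w (1, 0) * ∑ r ∈ stmt15_pathFinset S h00 k (k + 1), (r.map w).prod) := by
  classical
  rw [← Finset.sum_filter_add_sum_filter_not (stmt15_pathFinset S h00 n n) IsCatalan]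
  congr 1
  · apply Finset.sum_congr _ (fun _ _ => rfl)
    ext p
    simp [stmt15_mem_pathFinset, stmt15_mem_catFinset, and_comm]
  · -- rewrite RHS as a sum over a sigma finset
    have hrhs : ∀ k : ℕ,
        (∑ q ∈ stmt15_catFinset S h00 (n - k - 1), (q.map w).prod)
          * (w (1, 0) * ∑ r ∈ stmt15_pathFinset S h00 k (k + 1), (r.map w).prod)
        = ∑ x ∈ stmt15_catFinset S h00 (n - k - 1) ×ˢ stmt15_pathFinset S h00 k (k + 1),
            (x.1.map w).prod * (w (1, 0) * (x.2.map w).prod) := by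
      intro k
      rw [Finset.sum_product]
      simp only [Finset.mul_sum, Finset.sum_mul]
      rw [Finset.sum_comm]
    calc ∑ p ∈ (stmt15_pathFinset S h00 n n).filter (fun p => ¬ IsCatalan p), (p.map w).prod
        = ∑ x ∈ (Finset.range n).sigma
            (fun k => stmt15_catFinset S h00 (n - k - 1) ×ˢ stmt15_pathFinset S h00 k (k + 1)),
            ((x.2.1.map w).prod * (w (1, 0) * (x.2.2.map w).prod)) := ?_
      _ = _ := by
            rw [Finset.sum_sigma]
            exact Finset.sum_congr rfl fun k _ => (hrhs k).symm
    refine (Finset.sum_bij (fun a _ => a.2.1 ++ ((1:ℕ),(0:ℕ)) :: a.2.2) ?_ ?_ ?_ ?_).symm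
    · -- maps into the filter
      rintro ⟨k, q, r⟩ ha
      simp only [Finset.mem_sigma, Finset.mem_product, Finset.mem_range,
        stmt15_mem_catFinset, stmt15_mem_pathFinset] at ha
      obtain ⟨hk, ⟨⟨hqmem, hqx, hqy⟩, hqcat⟩, hrmem, hrx, hry⟩ := ha
      have hviol := stmt15_concat_violation q r (n - k - 1) hqx hqy hqcat
      simp only [Finset.mem_filter, stmt15_mem_pathFinset]
      refine ⟨⟨?_, ?_, ?_⟩, ?_⟩
      · intro st hst
        rcases List.mem_append.mp hst with h | h
        · exact hqmem st h
        · rcases List.mem_cons.mp h with h | h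
          · rw [h]; exact (hhoriz 1).mpr rfl
          · exact hrmem st h
      · rw [stmt15_xPart_length] at hqx hrx ⊢
        simp only [List.map_append, List.sum_append, List.map_cons, List.sum_cons]
        omega
      · rw [stmt15_yPart_length] at hqy hry ⊢
        simp only [List.map_append, List.sum_append, List.map_cons, List.sum_cons]
        omega
      · intro hcat
        have hlen : q.length + 1 ≤ (q ++ ((1:ℕ),(0:ℕ)) :: r).length := by
          simp
        exact absurd (hcat (q.length + 1) hlen) (not_le.mpr hviol.2)
    · -- injectivity
      rintro ⟨k1, q1, r1⟩ ha1 ⟨k2, q2, r2⟩ ha2 heq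
      simp only at heq
      simp only [Finset.mem_sigma, Finset.mem_product, Finset.mem_range,
        stmt15_mem_catFinset, stmt15_mem_pathFinset] at ha1 ha2
      obtain ⟨hk1, ⟨⟨_, hq1x, hq1y⟩, hq1cat⟩, -⟩ := ha1
      obtain ⟨hk2, ⟨⟨_, hq2x, hq2y⟩, hq2cat⟩, -⟩ := ha2
      have h1 := stmt15_concat_violation q1 r1 (n - k1 - 1) hq1x hq1y hq1cat
      have h2 := stmt15_concat_violation q2 r2 (n - k2 - 1) hq2x hq2y hq2cat
      have hv1 := h1.2
      have hv2 := h2.2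
      rw [heq] at hv1
      rw [← heq] at hv2
      have e1 : q2.length + 1 ≤ q1.length + 1 := h2.1 _ hv1
      have e2 : q1.length + 1 ≤ q2.length + 1 := h1.1 _ hv2
      obtain ⟨hq, hr⟩ := List.append_inj heq (by omega)
      have hr' : r1 = r2 := by injection hr
      have hk : k1 = k2 := by
        rw [hq] at hq1x
        rw [hq1x] at hq2x
        omega
      subst hk; subst hq; subst hr'
      rfl
    · -- surjectivity
      intro p hp
      simp only [Finset.mem_filter, stmt15_mem_pathFinset] at hp
      obtain ⟨⟨hmem, hx, hy⟩, hnc⟩ := hp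
      have hEx : ∃ j, yPart p j < xPart p j := by
        by_contra h
        push_neg at h
        exact hnc (fun j _ => h j)
      set t := Nat.find hEx with hts
      have hV : yPart p t < xPart p t := Nat.find_spec hEx
      have hmin : ∀ j < t, xPart p j ≤ yPart p j := fun j hj => not_lt.mp (Nat.find_min hEx hj)
      have ht0 : 0 < t := by
        rcases Nat.eq_zero_or_pos t with h | h
        · exfalso; rw [h] at hV; simp [xPart, yPart] at hV
        · exact h
      have htlen : t ≤ p.length := by
        by_contra h
        push_neg at h
        have htake : p.take t = p := List.take_of_length_le (le_of_lt h)
        have hx' : xPart p t = xPart p p.length := by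
          rw [xPart, htake, xPart, List.take_length]
        have hy' : yPart p t = yPart p p.length := by
          rw [yPart, htake, yPart, List.take_length]
        omega
      have hi : t - 1 < p.length := by omega
      have ht1 : t - 1 + 1 = t := by omega
      have hstep_x : xPart p t = xPart p (t - 1) + p[t-1].1 := by
        have := stmt15_xPart_succ p (t - 1) hi
        rwa [ht1] at this
      have hstep_y : yPart p t = yPart p (t - 1) + p[t-1].2 := by
        have := stmt15_yPart_succ p (t - 1) hi
        rwa [ht1] at this
      have hle : xPart p (t - 1) ≤ yPart p (t - 1) := hmin _ (by omega)
      have hsS : p[t-1] ∈ S := hmem _ (List.getElem_mem hi)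
      have hsS' : (p[t-1].1, p[t-1].2) ∈ S := by rwa [Prod.mk.eta]
      have hs2 : p[t-1].2 = 0 := by
        by_contra h
        have := hslope _ _ hsS' (Nat.pos_of_ne_zero h)
        omega
      have hs1 : p[t-1].1 = 1 := by
        refine (hhoriz p[t-1].1).mp ?_
        rwa [hs2] at hsS'
      have hstep : p[t-1] = ((1:ℕ), (0:ℕ)) := Prod.ext hs1 hs2
      have hc : xPart p (t - 1) = yPart p (t - 1) := by omega
      have hxn : (p.map Prod.fst).sum = n := by rwa [stmt15_xPart_length] at hx
      have hyn : (p.map Prod.snd).sum = n := by rwa [stmt15_yPart_length] at hy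
      have hxt_le : xPart p t ≤ n := by
        rw [stmt15_xPart_eq, ← hxn]
        exact stmt15_take_sum_le _ _
      set c := xPart p (t - 1) with hcdef
      have hcn : c + 1 ≤ n := by omega
      -- the three pieces
      refine ⟨⟨n - c - 1, p.take (t - 1), p.drop t⟩, ?_, ?_⟩
      · -- membership in the sigma finset
        have hqlen : (p.take (t - 1)).length = t - 1 := by
          rw [List.length_take]; omega
        have hsplit : p.take t ++ p.drop t = p := List.take_append_drop t p
        have hxsplit : xPart p t + ((p.drop t).map Prod.fst).sum = n := by
          rw [← hxn]
          conv_rhs => rw [← hsplit]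
          rw [List.map_append, List.sum_append]
          rfl
        have hysplit : yPart p t + ((p.drop t).map Prod.snd).sum = n := by
          rw [← hyn]
          conv_rhs => rw [← hsplit]
          rw [List.map_append, List.sum_append]
          rfl
        simp only [Finset.mem_sigma, Finset.mem_product, Finset.mem_range,
          stmt15_mem_catFinset, stmt15_mem_pathFinset]
        refine ⟨by omega, ⟨⟨?_, ?_, ?_⟩, ?_⟩, ?_, ?_, ?_⟩
        · exact fun st hst => hmem st (List.mem_of_mem_take hst)
        · rw [hqlen, stmt15_xPart_take p (t-1) (t-1) le_rfl]; omega
        · rw [hqlen, stmt15_yPart_take p (t-1) (t-1) le_rfl]; omega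
        · intro j hj
          rw [hqlen] at hj
          rw [stmt15_xPart_take p (t-1) j hj, stmt15_yPart_take p (t-1) j hj]
          exact hmin j (by omega)
        · exact fun st hst => hmem st (List.mem_of_mem_drop hst)
        · rw [stmt15_xPart_length]; omega
        · rw [stmt15_yPart_length]; omega
      · -- the concatenation is p
        show p.take (t-1) ++ ((1:ℕ),(0:ℕ)) :: p.drop t = p
        rw [← hstep]
        have : p[t-1] :: p.drop t = p.drop (t - 1) := by
          rw [List.drop_eq_getElem_cons hi, ht1]
        rw [this, List.take_append_drop]
    · -- weights
      rintro ⟨k, q, r⟩ ha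
      simp only [List.map_append, List.prod_append, List.map_cons, List.prod_cons]

theorem stmt15 (A : Type*) [CommRing A]
    (S : Set (ℕ × ℕ)) (h00 : (0, 0) ∉ S)
    (hhoriz : ∀ a : ℕ, (a, 0) ∈ S ↔ a = 1)
    (hslope : ∀ a b : ℕ, (a, b) ∈ S → 0 < b → a ≤ b)
    (w : ℕ × ℕ → A) (ρ : A) (hw : w (1, 0) = ρ)
    (Pw D0w D1w : PowerSeries A)
    (hP : Pw = PowerSeries.mk fun n =>
      ∑ᶠ p ∈ {p : List (ℕ × ℕ) | IsPath S n n p ∧ IsCatalan p}, (p.map w).prod)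
    (hD0 : D0w = PowerSeries.mk fun n =>
      ∑ᶠ p ∈ {p : List (ℕ × ℕ) | IsPath S n n p}, (p.map w).prod)
    (hD1 : D1w = PowerSeries.mk fun n => match n with
      | 0 => 0
      | k + 1 => ∑ᶠ p ∈ {p : List (ℕ × ℕ) | IsPath S k (k + 1) p}, (p.map w).prod) :
    Pw * (1 + PowerSeries.C ρ * D1w) = D0w := by
  classical
  subst hP hD0 hD1
  have hF := stmt15_finsum_path (A := A) S h00 (fun p => (p.map w).prod)
  have hC := stmt15_finsum_cat (A := A) S h00 (fun p => (p.map w).prod)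
  have hD1eq : (PowerSeries.mk fun n => match n with
      | 0 => (0 : A)
      | k + 1 => ∑ᶠ p ∈ {p : List (ℕ × ℕ) | IsPath S k (k + 1) p}, (p.map w).prod)
      = PowerSeries.mk (fun n => if n = 0 then 0 else
          ∑ p ∈ stmt15_pathFinset S h00 (n - 1) n, (p.map w).prod) := by
    ext m
    rw [PowerSeries.coeff_mk, PowerSeries.coeff_mk]
    cases m with
    | zero => simp
    | succ k =>
      show (∑ᶠ p ∈ {p : List (ℕ × ℕ) | IsPath S k (k + 1) p}, (p.map w).prod) = _
      rw [hF k (k + 1)]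
      simp
  rw [hD1eq]
  ext n
  rw [PowerSeries.coeff_mul]
  simp only [PowerSeries.coeff_mk, map_add, PowerSeries.coeff_one, PowerSeries.coeff_C_mul,
    hC, hF]
  rw [stmt15_key S h00 hhoriz hslope w n]
  simp only [hw, mul_add, Finset.sum_add_distrib]
  congr 1
  · -- constant-term part
    refine (Finset.sum_eq_single ((n, 0) : ℕ × ℕ) ?_ ?_).trans ?_
    · intro b hb hne
      rw [Finset.HasAntidiagonal.mem_antidiagonal] at hb
      have hb2 : b.2 ≠ 0 := by
        intro h
        exact hne (Prod.ext (by omega) h)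
      simp [hb2]
    · intro h
      exact absurd (Finset.HasAntidiagonal.mem_antidiagonal.mpr (by simp)) h
    · simp
  · -- main part
    rw [Finset.Nat.sum_antidiagonal_eq_sum_range_succ_mk, Finset.sum_range_succ]
    norm_num
    refine Finset.sum_nbij' (fun k => n - k - 1) (fun k => n - k - 1) ?_ ?_ ?_ ?_ ?_ <;>
      intro k hk <;> rw [Finset.mem_range] at hk <;> beta_reduce
    · rw [Finset.mem_range]; omega
    · rw [Finset.mem_range]; omega
    · omega
    · omega
    · 

      have h2 : n - (n - k - 1) - 1 = k := by omega
      have h3 : n - k - 1 + 1 = n - k := by omega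
      rw [h2, h3, if_neg (by omega)]
end

section
/- Let S = {(a,0) : a ≥ 1} ∪ {(0,a) : a ≥ 1} be the set of rook steps. Work in the ring ℚ[ρ,ν] of polynomials in two variables, and for n ≥ 0 let p^w_n = Σ_π ρ^{h(π)} ν^{v(π)}, where the sum is over all Catalan S-paths π from (0,0) to (n,n), h(π) is the number of horizontal steps (a,0) of π and v(π) is the number of vertical steps (0,a) of π. Let P^w(t) = Σ_{n≥0} p^w_n tⁿ ∈ (ℚ[ρ,ν])⟦t⟧. Then β = (1+ρ)·P^w(t) satisfies the quadratic equation (1+ν)t·β² − (1 + (1+ρ+ν)t)·β + (1+ρ) = 0 in (ℚ[ρ,ν])⟦t⟧. -/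
/-- The set of rook steps: proper horizontal and vertical steps. -/
def rookSteps : Set (ℕ × ℕ) :=
  {st | (∃ a : ℕ, 1 ≤ a ∧ st = (a, 0)) ∨ (∃ a : ℕ, 1 ≤ a ∧ st = (0, a))}

/-- Enumerator of Catalan rook paths to `(n,n)` by numbers of horizontal and
vertical steps: `Σ_π ρ^{h(π)} ν^{v(π)}` in `ℚ[ρ,ν]`, where `ρ = X 0`, `ν = X 1`. -/
noncomputable def pRookW (n : ℕ) : MvPolynomial (Fin 2) ℚ :=
  ∑ᶠ p ∈ {p : List (ℕ × ℕ) | IsPath rookSteps n n p ∧ IsCatalan p},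
    (MvPolynomial.X 0 : MvPolynomial (Fin 2) ℚ) ^ (p.countP fun st => st.2 == 0) *
    (MvPolynomial.X 1 : MvPolynomial (Fin 2) ℚ) ^ (p.countP fun st => st.1 == 0)


namespace S16
open MvPolynomial

abbrev Step := ℕ × ℕ
def XS (p : List Step) : ℕ := (p.map Prod.fst).sum
def YS (p : List Step) : ℕ := (p.map Prod.snd).sum

@[simp] lemma XS_nil : XS [] = 0 := rfl
@[simp] lemma YS_nil : YS [] = 0 := rfl
@[simp] lemma XS_cons (st : Step) (p : List Step) : XS (st :: p) = st.1 + XS p := rfl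
@[simp] lemma YS_cons (st : Step) (p : List Step) : YS (st :: p) = st.2 + YS p := rfl
@[simp] lemma XS_append (a b : List Step) : XS (a ++ b) = XS a + XS b := by
  simp [XS]
@[simp] lemma YS_append (a b : List Step) : YS (a ++ b) = YS a + YS b := by
  simp [YS]

/-- generic Catalan condition via prefixes -/
def Cat (p : List Step) : Prop := ∀ q, q <+: p → XS q ≤ YS q

lemma isCatalan_iff (p : List Step) : IsCatalan p ↔ Cat p := by
  constructor
  · intro h q hq
    have hl : q.length ≤ p.length := hq.length_le
    have he : q = p.take q.length := List.prefix_iff_eq_take.mp hq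
    have h2 := h q.length hl
    simp only [xPart, yPart] at h2
    rw [← he] at h2
    exact h2
  · intro h j _
    exact h (p.take j) (List.take_prefix _ _)

lemma isPath_iff (S : Set Step) (n m : ℕ) (p : List Step) :
    IsPath S n m p ↔ (∀ st ∈ p, st ∈ S) ∧ XS p = n ∧ YS p = m := by
  simp only [IsPath, xPart, yPart, List.take_length]; rfl

/-- good paths -/
def GP (n : ℕ) (p : List Step) : Prop :=
  (∀ st ∈ p, st ∈ rookSteps) ∧ XS p = n ∧ YS p = n ∧ Cat p

lemma GP_iff (n : ℕ) (p : List Step) :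
    GP n p ↔ IsPath rookSteps n n p ∧ IsCatalan p := by
  rw [isPath_iff, isCatalan_iff, GP]; tauto

lemma rook_cases {st : Step} (h : st ∈ rookSteps) :
    (1 ≤ st.1 ∧ st.2 = 0) ∨ (st.1 = 0 ∧ 1 ≤ st.2) := by
  rcases h with ⟨a, ha, rfl⟩ | ⟨a, ha, rfl⟩
  · exact Or.inl ⟨ha, rfl⟩
  · exact Or.inr ⟨rfl, ha⟩

lemma length_le_sum (l : List ℕ) (h : ∀ x ∈ l, 1 ≤ x) : l.length ≤ l.sum := by
  induction l with
  | nil => simp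
  | cons x t ih =>
    simp only [List.length_cons, List.sum_cons]
    have := ih (fun y hy => h y (List.mem_cons_of_mem _ hy))
    have := h x (List.mem_cons_self)
    omega

lemma mem_le_sum {l : List ℕ} {x : ℕ} (h : x ∈ l) : x ≤ l.sum := by
  induction l with
  | nil => simp at h
  | cons y t ih =>
    rcases List.mem_cons.mp h with rfl | h'
    · simp
    · have := ih h'; simp; omega

lemma finite_GP (n : ℕ) : {p : List Step | GP n p}.Finite := by
  have hfin : Set.Finite ((List.map (fun q : Fin (n+1) × Fin (n+1) => ((q.1 : ℕ), (q.2 : ℕ)))) ''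
      {l : List (Fin (n+1) × Fin (n+1)) | l.length ≤ 2*n}) :=
    Set.Finite.image _ (List.finite_length_le _ (2*n))
  apply hfin.subset
  rintro p ⟨hs, hx0, hy0, -⟩
  have hx : (p.map Prod.fst).sum = n := hx0
  have hy : (p.map Prod.snd).sum = n := hy0
  have hb : ∀ st ∈ p, st.1 ≤ n ∧ st.2 ≤ n := by
    intro st hst
    constructor
    · have : st.1 ∈ p.map Prod.fst := List.mem_map_of_mem hst
      have := mem_le_sum this
      omega
    · have : st.2 ∈ p.map Prod.snd := List.mem_map_of_mem hst
      have := mem_le_sum this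
      omega
  refine ⟨p.pmap (fun st h => ((⟨st.1, by omega⟩ : Fin (n+1)), (⟨st.2, by omega⟩ : Fin (n+1))))
      (fun st hst => hb st hst), ?_, ?_⟩
  · simp only [Set.mem_setOf_eq, List.length_pmap]
    have h1 : ∀ st ∈ p, 1 ≤ st.1 + st.2 := by
      intro st hst
      rcases rook_cases (hs st hst) with ⟨h1, h2⟩ | ⟨h1, h2⟩ <;> omega
    have := length_le_sum (p.map (fun st => st.1 + st.2)) (by
      intro x hx'
      rcases List.mem_map.mp hx' with ⟨st, hst, rfl⟩
      exact h1 st hst)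
    have hsum : ∀ q : List Step, (q.map (fun st => st.1 + st.2)).sum
        = (q.map Prod.fst).sum + (q.map Prod.snd).sum := by
      intro q
      induction q with
      | nil => simp
      | cons a t ih => simp [ih]; omega
    rw [List.length_map, hsum] at this
    omega
  · rw [List.map_pmap]
    have : ∀ (q : List Step) (H : ∀ st ∈ q, st.1 ≤ n ∧ st.2 ≤ n),
        List.pmap (fun (a : Step) (h : a.1 ≤ n ∧ a.2 ≤ n) =>
          ((↑(⟨a.1, by omega⟩ : Fin (n+1)), ↑(⟨a.2, by omega⟩ : Fin (n+1))) : ℕ × ℕ)) q H = q := by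
      intro q
      induction q with
      | nil => intro; rfl
      | cons a t ih => intro H; simp [ih]
    exact this p _

end S16

-- continuation (appended to s1 contents for testing)
namespace S16
open MvPolynomial

noncomputable def wt (p : List Step) : MvPolynomial (Fin 2) ℚ :=
  (X 0 : MvPolynomial (Fin 2) ℚ) ^ (p.countP fun st => st.2 == 0) *
  (X 1 : MvPolynomial (Fin 2) ℚ) ^ (p.countP fun st => st.1 == 0)

@[simp] lemma wt_nil : wt [] = 1 := by simp [wt]

lemma wt_append (a b : List Step) : wt (a ++ b) = wt a * wt b := by
  simp only [wt, List.countP_append, pow_add]; ring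

lemma wt_vcons {b : ℕ} (hb : 1 ≤ b) (p : List Step) :
    wt ((0, b) :: p) = X 1 * wt p := by
  have h1 : (((0, b) : Step).2 == 0) = false := by simp; omega
  have h2 : (((0, b) : Step).1 == 0) = true := by simp
  simp only [wt, List.countP_cons, h1, h2]
  simp [pow_succ]; ring

lemma wt_hcons {b : ℕ} (hb : 1 ≤ b) (p : List Step) :
    wt ((b, 0) :: p) = X 0 * wt p := by
  have h1 : (((b, 0) : Step).2 == 0) = true := by simp
  have h2 : (((b, 0) : Step).1 == 0) = false := by simp; omega
  simp only [wt, List.countP_cons, h1, h2]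
  simp [pow_succ]; ring

lemma wt_hsingle {b : ℕ} (hb : 1 ≤ b) : wt [(b, 0)] = X 0 := by
  rw [wt_hcons hb]; simp

noncomputable def PF (n : ℕ) : Finset (List Step) := (finite_GP n).toFinset

lemma mem_PF {n : ℕ} {p : List Step} : p ∈ PF n ↔ GP n p := by
  simp [PF, Set.Finite.mem_toFinset]

noncomputable def pp (n : ℕ) : MvPolynomial (Fin 2) ℚ := ∑ p ∈ PF n, wt p

/-- connect to the finsum definition -/
lemma pRookW_eq (n : ℕ) :
    (∑ᶠ p ∈ {p : List Step | IsPath rookSteps n n p ∧ IsCatalan p},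
      (X 0 : MvPolynomial (Fin 2) ℚ) ^ (p.countP fun st => st.2 == 0) *
      (X 1 : MvPolynomial (Fin 2) ℚ) ^ (p.countP fun st => st.1 == 0)) = pp n := by
  have hset : {p : List Step | IsPath rookSteps n n p ∧ IsCatalan p} = {p | GP n p} := by
    ext p; exact (GP_iff n p).symm
  rw [hset]
  rw [show {p | GP n p} = ((PF n : Finset (List Step)) : Set (List Step)) by
    simp [PF, Set.Finite.coe_toFinset]]
  rw [finsum_mem_coe_finset]
  rfl

lemma nil_GP : GP 0 [] := by
  refine ⟨by simp, rfl, rfl, ?_⟩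
  intro q hq
  simp [List.prefix_nil.mp hq]

lemma GP_zero {p : List Step} (h : GP 0 p) : p = [] := by
  rcases h with ⟨hs, hx, hy, -⟩
  cases p with
  | nil => rfl
  | cons st t =>
    exfalso
    rcases rook_cases (hs st (List.mem_cons_self)) with ⟨h1, h2⟩ | ⟨h1, h2⟩
    · have : XS (st :: t) = 0 := hx
      simp at this; omega
    · have : YS (st :: t) = 0 := hy
      simp at this; omega

lemma pp_zero : pp 0 = 1 := by
  have : PF 0 = {[]} := by
    ext p
    simp only [mem_PF, Finset.mem_singleton]
    exact ⟨GP_zero, by rintro rfl; exact nil_GP⟩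
  simp [pp, this]

lemma GP_ne_nil {n : ℕ} {p : List Step} (h : GP (n+1) p) : p ≠ [] := by
  rintro rfl
  exact absurd h.2.1 (by simp)

/-- first step of a Catalan rook path is vertical -/
lemma first_step {p : List Step} {st : Step} {t : List Step}
    (hs : ∀ s ∈ p, s ∈ rookSteps) (hc : Cat p) (hp : p = st :: t) :
    st.1 = 0 ∧ 1 ≤ st.2 := by
  subst hp
  have h1 := hc [st] ⟨t, rfl⟩
  simp only [XS_cons, YS_cons, XS_nil, YS_nil, add_zero] at h1
  rcases rook_cases (hs st (List.mem_cons_self)) with ⟨ha, hb⟩ | ⟨ha, hb⟩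
  · omega
  · exact ⟨ha, hb⟩

/-- last step of a Catalan path ending on the diagonal is horizontal -/
lemma last_step {p : List Step} {st : Step} {t : List Step}
    (hs : ∀ s ∈ p, s ∈ rookSteps) (hc : Cat p) (hd : XS p = YS p)
    (hp : p = t ++ [st]) : 1 ≤ st.1 ∧ st.2 = 0 := by
  subst hp
  have h1 := hc t ⟨[st], rfl⟩
  simp only [XS_append, YS_append] at hd
  simp only [XS_cons, YS_cons, XS_nil, YS_nil] at hd
  rcases rook_cases (hs st (by simp)) with ⟨ha, hb⟩ | ⟨ha, hb⟩
  · exact ⟨ha, hb⟩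
  · omega

/-- a good path of positive parameter has length ≥ 2, starts vertical, ends horizontal -/
lemma GP_decompose {n : ℕ} {p : List Step} (h : GP (n+1) p) :
    ∃ a b q, 1 ≤ a ∧ 1 ≤ b ∧ p = (0, a) :: q ++ [(b, 0)] := by
  obtain ⟨hs, hx, hy, hc⟩ := h
  obtain ⟨st, t, hp⟩ := List.exists_cons_of_ne_nil (GP_ne_nil ⟨hs, hx, hy, hc⟩)
  obtain ⟨h1, h2⟩ := first_step hs hc hp
  rcases List.eq_nil_or_concat t with rfl | ⟨q, l, rfl⟩
  · exfalso
    subst hp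
    simp only [XS_cons, XS_nil, add_zero] at hx
    omega
  · obtain ⟨h3, h4⟩ := last_step (t := st :: q) (st := l) hs hc (hx.trans hy.symm)
      (by rw [hp]; simp [List.concat_eq_append])
    exact ⟨st.2, l.1, q, h2, h3, by
      rw [hp]
      have h5 : st = (0, st.2) := by rw [← h1]
      have hl : l = (l.1, 0) := by rw [← h4]
      rw [← h5, ← hl]
      simp [List.concat_eq_append]⟩

/-- prefix helpers -/
lemma prefix_concat_cases {q l : List Step} {x : Step} (h : q <+: l ++ [x]) :
    q <+: l ∨ q = l ++ [x] := by
  rcases h with ⟨r, hr⟩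
  rcases r.eq_nil_or_concat with rfl | ⟨r', y, rfl⟩
  · right; simpa using hr
  · left
    refine ⟨r', ?_⟩
    have := congrArg List.dropLast hr
    simpa [List.dropLast_concat, ← List.append_assoc] using this

lemma prefix_append_cases {q a b : List Step} (h : q <+: a ++ b) :
    q <+: a ∨ ∃ q', q' <+: b ∧ q = a ++ q' := by
  by_cases hl : q.length ≤ a.length
  · left
    have hq : q = (a ++ b).take q.length := List.prefix_iff_eq_take.mp h
    rw [List.take_append_of_le_length hl] at hq
    rw [hq]
    exact List.take_prefix _ _
  · right
    have hq : q = (a ++ b).take q.length := List.prefix_iff_eq_take.mp h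
    refine ⟨b.take (q.length - a.length), List.take_prefix _ _, ?_⟩
    conv_lhs => rw [hq, show q.length = a.length + (q.length - a.length) by omega,
      List.take_append]
    rw [List.take_of_length_le (by omega), Nat.add_sub_cancel_left]

lemma prefix_append_left {q a b : List Step} (h : q <+: b) : a ++ q <+: a ++ b := by
  rcases h with ⟨r, rfl⟩
  exact ⟨r, by simp⟩

end S16

namespace S16
open MvPolynomial

/-! ### extension operations -/

def fe (e : Bool) (L : List Step) : List Step :=
  if e then (0, 1) :: L
  else match L with
  | [] => []
  | (a, b) :: L' => (a, b + 1) :: L'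

def bl (L : List Step) : List Step :=
  match L with
  | [] => []
  | (a, b) :: L' => (a + 1, b) :: L'

def be (f : Bool) (L : List Step) : List Step :=
  if f then L ++ [(1, 0)] else (bl L.reverse).reverse

def unF (L : List Step) : Bool × List Step :=
  match L with
  | [] => (true, [])
  | (a, b) :: L' => if b ≤ 1 then (true, L') else (false, (a, b - 1) :: L')

def unBaux (L : List Step) : Bool × List Step :=
  match L with
  | [] => (true, [])
  | (a, b) :: L' => if a ≤ 1 then (true, L') else (false, (a - 1, b) :: L')

def unB (L : List Step) : Bool × List Step :=
  ((unBaux L.reverse).1, (unBaux L.reverse).2.reverse)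

@[simp] lemma fe_true (L : List Step) : fe true L = (0, 1) :: L := rfl
@[simp] lemma fe_false_cons (a b : ℕ) (L : List Step) :
    fe false ((a, b) :: L) = (a, b + 1) :: L := rfl
@[simp] lemma be_true (L : List Step) : be true L = L ++ [(1, 0)] := rfl

lemma be_false_concat (L : List Step) (a b : ℕ) :
    be false (L ++ [(a, b)]) = L ++ [(a + 1, b)] := by
  simp [be, bl, List.reverse_append]

lemma unB_concat (L : List Step) (a b : ℕ) :
    unB (L ++ [(a, b)]) = if a ≤ 1 then (true, L) else (false, L ++ [(a - 1, b)]) := by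
  by_cases h : a ≤ 1 <;> simp [unB, unBaux, List.reverse_append, h]

/-! ### the prime path set -/

def PrS (k : ℕ) : Set (List Step) :=
  {p | GP k p ∧ p ≠ [] ∧ ∀ q, q <+: p → q ≠ [] → q.length < p.length → XS q < YS q}

lemma finite_PrS (k : ℕ) : (PrS k).Finite :=
  (finite_GP k).subset (fun _ h => h.1)

noncomputable def PrF (k : ℕ) : Finset (List Step) := (finite_PrS k).toFinset

lemma mem_PrF {k : ℕ} {p : List Step} : p ∈ PrF k ↔ p ∈ PrS k := by
  simp [PrF, Set.Finite.mem_toFinset]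

/-! ### forward: building prime paths -/

lemma be_good {m : ℕ} {γ : List Step} (hγ : GP (m + 1) γ) (f : Bool) :
    (∀ st ∈ be f γ, st ∈ rookSteps) ∧ XS (be f γ) = m + 2 ∧ YS (be f γ) = m + 1 ∧
    (∀ r, r <+: be f γ → r.length < (be f γ).length → XS r ≤ YS r) ∧
    (∃ a Mt, 1 ≤ a ∧ be f γ = (0, a) :: Mt) ∧
    wt (be f γ) = (if f then X 0 else 1) * wt γ ∧
    unB (be f γ) = (f, γ) := by
  obtain ⟨a, b, q, ha, hb, hγeq⟩ := GP_decompose hγ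
  obtain ⟨hs, hx, hy, hc⟩ := hγ
  have hγγ : γ = ((0, a) :: q) ++ [(b, 0)] := by rw [hγeq]
  cases f with
  | true =>
    simp only [be_true]
    refine ⟨?_, ?_, ?_, ?_, ?_, ?_, ?_⟩
    · intro st hst
      rcases List.mem_append.mp hst with h | h
      · exact hs st h
      · simp only [List.mem_singleton] at h; subst h; exact Or.inl ⟨1, le_refl 1, rfl⟩
    · simp [hx]
    · simp [hy]
    · intro r hr hrl
      rcases prefix_concat_cases hr with h | rfl
      · exact hc r h
      · simp at hrl
    · exact ⟨a, q ++ [(b, 0)] ++ [(1, 0)], ha, by rw [hγγ]; simp⟩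
    · rw [wt_append, wt_hsingle (le_refl 1)]; simp [mul_comm]
    · rw [unB_concat]; simp
  | false =>
    rw [hγγ, be_false_concat]
    have hγ₀ : ((0, a) :: q) <+: γ := ⟨[(b, 0)], hγγ.symm⟩
    refine ⟨?_, ?_, ?_, ?_, ?_, ?_, ?_⟩
    · intro st hst
      rcases List.mem_append.mp hst with h | h
      · exact hs st (hγ₀.subset h)
      · simp only [List.mem_singleton] at h; subst h; exact Or.inl ⟨b + 1, by omega, rfl⟩
    · have h9 : XS γ = XS q + b := by rw [hγγ]; simp
      simp; omega
    · have h9 : YS γ = a + YS q := by rw [hγγ]; simp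
      simp; omega
    · intro r hr hrl
      rcases prefix_concat_cases hr with h | rfl
      · exact hc r (h.trans hγ₀)
      · simp at hrl
    · exact ⟨a, q ++ [(b + 1, 0)], ha, by simp⟩
    · rw [wt_append, wt_hsingle (by omega : 1 ≤ b + 1)]
      conv_rhs => rw [wt_append, wt_hsingle hb]
      simp
    · rw [unB_concat]
      have : ¬ (b + 1 ≤ 1) := by omega
      simp only [this, if_false]
      have : b + 1 - 1 = b := by omega
      rw [this, ← hγγ]

lemma fe_good (e : Bool) {M : List Step} {c : ℕ}
    (hsM : ∀ st ∈ M, st ∈ rookSteps)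
    (hXM : XS M = c + 1) (hYM : YS M = c)
    (hsemi : ∀ r, r <+: M → r.length < M.length → XS r ≤ YS r)
    (hhd : ∃ a Mt, 1 ≤ a ∧ M = (0, a) :: Mt) :
    fe e M ∈ PrS (c + 1) ∧
    wt (fe e M) = (if e then X 1 else 1) * wt M ∧
    unF (fe e M) = (e, M) := by
  obtain ⟨a, Mt, ha, hM⟩ := hhd
  have hXMeq : XS M = YS M + 1 := by omega
  cases e with
  | true =>
    simp only [fe_true]
    have hcat : ∀ q', q' <+: M → XS q' ≤ YS q' + 1 := by
      intro q' hq'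
      by_cases hl : q'.length < M.length
      · have := hsemi q' hq' hl; omega
      · have : q' = M := hq'.eq_of_length (by have := hq'.length_le; omega)
        subst this; omega
    refine ⟨⟨⟨?_, ?_, ?_, ?_⟩, by simp, ?_⟩, ?_, ?_⟩
    · intro st hst
      rcases List.mem_cons.mp hst with rfl | h
      · exact Or.inr ⟨1, le_refl 1, rfl⟩
      · exact hsM st h
    · simpa using hXM
    · simp; omega
    · intro r hr
      cases r with
      | nil => simp
      | cons s r' =>
        obtain ⟨rfl, hr'⟩ := List.cons_prefix_cons.mp hr
        have := hcat r' hr'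
        simp; omega
    · intro r hr hne hrl
      cases r with
      | nil => exact absurd rfl hne
      | cons s r' =>
        obtain ⟨rfl, hr'⟩ := List.cons_prefix_cons.mp hr
        simp only [List.length_cons] at hrl
        have := hsemi r' hr' (by omega)
        simp; omega
    · rw [wt_vcons (le_refl 1)]; simp
    · simp [unF]
  | false =>
    rw [hM]
    simp only [fe_false_cons]
    have hsemi' : ∀ r', r' <+: Mt → r'.length < Mt.length → XS r' ≤ YS r' + a := by
      intro r' hr' hl
      have h1 : (0, a) :: r' <+: M := by rw [hM]; exact List.cons_prefix_cons.mpr ⟨rfl, hr'⟩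
      have := hsemi _ h1 (by rw [hM]; simpa using hl)
      simp at this; omega
    have hMt : XS Mt = YS Mt + a + 1 := by
      rw [hM] at hXM hYM; simp at hXM hYM; omega
    refine ⟨⟨⟨?_, ?_, ?_, ?_⟩, by simp, ?_⟩, ?_, ?_⟩
    · intro st hst
      rcases List.mem_cons.mp hst with rfl | h
      · exact Or.inr ⟨a + 1, by omega, rfl⟩
      · exact hsM st (by rw [hM]; exact List.mem_cons_of_mem _ h)
    · rw [hM] at hXM; simpa using hXM
    · rw [hM] at hYM; simp at hYM ⊢; omega
    · intro r hr
      cases r with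
      | nil => simp
      | cons s r' =>
        obtain ⟨rfl, hr'⟩ := List.cons_prefix_cons.mp hr
        by_cases hl : r'.length < Mt.length
        · have := hsemi' r' hr' hl
          simp; omega
        · have : r' = Mt := hr'.eq_of_length (by have := hr'.length_le; omega)
          subst this
          simp; omega
    · intro r hr hne hrl
      cases r with
      | nil => exact absurd rfl hne
      | cons s r' =>
        obtain ⟨rfl, hr'⟩ := List.cons_prefix_cons.mp hr
        simp only [List.length_cons] at hrl
        have := hsemi' r' hr' (by omega)
        simp; omega
    · rw [wt_vcons (by omega : 1 ≤ a + 1), wt_vcons ha]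
      simp
    · simp only [unF]
      have : ¬ (a + 1 ≤ 1) := by omega
      simp only [this, if_false]
      have h2 : a + 1 - 1 = a := by omega
      rw [h2, ← hM]

end S16

namespace S16
open MvPolynomial

lemma unF_good {m : ℕ} {α : List Step} (hα : α ∈ PrS (m + 2)) :
    fe (unF α).1 (unF α).2 = α ∧
    (∀ st ∈ (unF α).2, st ∈ rookSteps) ∧
    XS (unF α).2 = m + 2 ∧ YS (unF α).2 = m + 1 ∧
    (∀ r, r <+: (unF α).2 → r.length < (unF α).2.length → XS r ≤ YS r) ∧
    (∃ M₀ b, 1 ≤ b ∧ (unF α).2 = M₀ ++ [(b, 0)]) := by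
  obtain ⟨hGP, hne, hstrict⟩ := hα
  obtain ⟨a, b, q, ha, hb, hαeq⟩ := GP_decompose hGP
  obtain ⟨hs, hx, hy, hc⟩ := hGP
  rw [hαeq] at hx hy
  simp only [XS_cons, YS_cons, XS_append, YS_append, XS_nil, YS_nil, XS_cons, YS_cons] at hx hy
  by_cases ha1 : a ≤ 1
  · have ha' : a = 1 := by omega
    subst ha'
    have hu : unF α = (true, q ++ [(b, 0)]) := by rw [hαeq]; simp [unF]
    rw [hu]
    refine ⟨by simp [hαeq], ?_, by simp; omega, by simp; omega, ?_, ⟨q, b, hb, rfl⟩⟩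
    · intro st hst
      exact hs st (by rw [hαeq]; exact List.mem_cons_of_mem _ hst)
    · intro r hr hrl
      have h1 : (0, 1) :: r <+: α := by
        rw [hαeq]; exact List.cons_prefix_cons.mpr ⟨rfl, hr⟩
      have h2 := hstrict _ h1 (by simp) (by rw [hαeq]; simpa using hrl)
      simp at h2; omega
  · have hu : unF α = (false, (0, a - 1) :: (q ++ [(b, 0)])) := by
      rw [hαeq]; simp [unF, ha1]
    rw [hu]
    refine ⟨?_, ?_, by simp; omega, by simp; omega, ?_, ⟨(0, a - 1) :: q, b, hb, by simp⟩⟩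
    · rw [fe_false_cons, show a - 1 + 1 = a by omega, ← List.cons_append, ← hαeq]
    · intro st hst
      rcases List.mem_cons.mp hst with rfl | h
      · exact Or.inr ⟨a - 1, by omega, rfl⟩
      · exact hs st (by rw [hαeq]; exact List.mem_cons_of_mem _ h)
    · intro r hr hrl
      cases r with
      | nil => simp
      | cons s r' =>
        obtain ⟨rfl, hr'⟩ := List.cons_prefix_cons.mp hr
        have h1 : (0, a) :: r' <+: α := by
          rw [hαeq]; exact List.cons_prefix_cons.mpr ⟨rfl, hr'⟩
        have h2 := hstrict _ h1 (by simp) (by rw [hαeq]; simpa using hrl)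
        simp at h2 ⊢; omega

lemma unB_good {m : ℕ} {M : List Step}
    (hsM : ∀ st ∈ M, st ∈ rookSteps)
    (hXM : XS M = m + 2) (hYM : YS M = m + 1)
    (hsemi : ∀ r, r <+: M → r.length < M.length → XS r ≤ YS r)
    (hcc : ∃ M₀ b, 1 ≤ b ∧ M = M₀ ++ [(b, 0)]) :
    be (unB M).1 (unB M).2 = M ∧ GP (m + 1) (unB M).2 := by
  obtain ⟨M₀, b, hb, hM⟩ := hcc
  have hM₀ : M₀ <+: M := ⟨[(b, 0)], hM.symm⟩
  have hMlen : M₀.length < M.length := by rw [hM]; simp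
  rw [hM] at hXM hYM
  simp only [XS_append, YS_append, XS_cons, YS_cons, XS_nil, YS_nil] at hXM hYM
  by_cases hb1 : b ≤ 1
  · have hb' : b = 1 := by omega
    subst hb'
    have hu : unB M = (true, M₀) := by rw [hM, unB_concat]; simp
    rw [hu]; dsimp only
    refine ⟨by rw [be_true, ← hM], ?_, by omega, by omega, ?_⟩
    · intro st hst; exact hsM st (hM₀.subset hst)
    · intro r hr
      exact hsemi r (hr.trans hM₀) (lt_of_le_of_lt hr.length_le hMlen)
  · have hu : unB M = (false, M₀ ++ [(b - 1, 0)]) := by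
      rw [hM, unB_concat]; simp [hb1]
    rw [hu]; dsimp only
    refine ⟨?_, ?_, by simp; omega, by simp; omega, ?_⟩
    · rw [be_false_concat, show b - 1 + 1 = b by omega, ← hM]
    · intro st hst
      rcases List.mem_append.mp hst with h | h
      · exact hsM st (hM₀.subset h)
      · simp only [List.mem_singleton] at h; subst h
        exact Or.inl ⟨b - 1, by omega, rfl⟩
    · intro r hr
      rcases prefix_concat_cases hr with h | rfl
      · exact hsemi r (h.trans hM₀) (lt_of_le_of_lt h.length_le hMlen)
      · simp; omega

/-! ### the prime generating sums -/

lemma PrS_one {p : List Step} : p ∈ PrS 1 ↔ p = [(0, 1), (1, 0)] := by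
  constructor
  · rintro ⟨hGP, -, -⟩
    obtain ⟨a, b, q, ha, hb, hp⟩ := GP_decompose hGP
    obtain ⟨hs, hx, hy, -⟩ := hGP
    rw [hp] at hx hy
    simp only [XS_cons, YS_cons, XS_append, YS_append, XS_nil, YS_nil] at hx hy
    have hq : q = [] := by
      cases q with
      | nil => rfl
      | cons st t =>
        exfalso
        have hst : st ∈ rookSteps := hs st (by rw [hp]; simp)
        simp only [XS_cons, YS_cons] at hx hy
        rcases rook_cases hst with ⟨h1, h2⟩ | ⟨h1, h2⟩ <;> omega
    subst hq
    simp only [XS_nil, YS_nil] at hx hy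
    rw [hp]
    have : a = 1 := by omega
    have : b = 1 := by omega
    simp_all
  · rintro rfl
    refine ⟨⟨?_, rfl, rfl, ?_⟩, by simp, ?_⟩
    · intro st hst
      rcases List.mem_cons.mp hst with rfl | hst
      · exact Or.inr ⟨1, le_refl 1, rfl⟩
      · simp only [List.mem_singleton] at hst; subst hst
        exact Or.inl ⟨1, le_refl 1, rfl⟩
    · intro r hr
      cases r with
      | nil => simp
      | cons s r' =>
        obtain ⟨rfl, hr'⟩ := List.cons_prefix_cons.mp hr
        cases r' with
        | nil => simp
        | cons s' r'' =>
          obtain ⟨rfl, hr''⟩ := List.cons_prefix_cons.mp hr'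
          rw [List.prefix_nil.mp hr'']
          simp
    · intro r hr hne hrl
      cases r with
      | nil => exact absurd rfl hne
      | cons s r' =>
        obtain ⟨rfl, hr'⟩ := List.cons_prefix_cons.mp hr
        simp only [List.length_cons] at hrl
        have : r' = [] := by
          cases r' with
          | nil => rfl
          | cons s' r'' =>
            obtain ⟨rfl, hr''⟩ := List.cons_prefix_cons.mp hr'
            rw [List.prefix_nil.mp hr''] at hrl
            simp at hrl
        subst this
        simp

lemma sum_PrF_one : ∑ α ∈ PrF 1, wt α = X 0 * X 1 := by
  have h : PrF 1 = {[(0, 1), (1, 0)]} := by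
    ext p
    rw [mem_PrF, PrS_one, Finset.mem_singleton]
  rw [h, Finset.sum_singleton]
  rw [wt_vcons (le_refl 1), wt_hsingle (le_refl 1)]
  ring

lemma sum_PrF_succ (m : ℕ) :
    ∑ α ∈ PrF (m + 2), wt α = (1 + X 0) * (1 + X 1) * pp (m + 1) := by
  have key : ∑ x ∈ (Finset.univ : Finset (Bool × Bool)) ×ˢ PF (m + 1),
      ((if x.1.1 then X 1 else 1) * ((if x.1.2 then X 0 else 1) * wt x.2) :
        MvPolynomial (Fin 2) ℚ)
      = ∑ α ∈ PrF (m + 2), wt α := by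
    refine Finset.sum_nbij' (fun x => fe x.1.1 (be x.1.2 x.2))
      (fun α => (((unF α).1, (unB (unF α).2).1), (unB (unF α).2).2)) ?_ ?_ ?_ ?_ ?_
    · rintro ⟨⟨e, f⟩, γ⟩ hx
      have hγ : GP (m + 1) γ := mem_PF.mp (Finset.mem_product.mp hx).2
      obtain ⟨h1, h2, h3, h4, h5, h6, h7⟩ := be_good hγ f
      exact mem_PrF.mpr (fe_good e h1 h2 h3 h4 h5).1
    · intro α hα
      have hα' := mem_PrF.mp hα
      obtain ⟨hfe, h1, h2, h3, h4, h5⟩ := unF_good hα'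
      obtain ⟨hbe, hγ⟩ := unB_good h1 h2 h3 h4 h5
      rw [Finset.mem_product]
      exact ⟨Finset.mem_univ _, mem_PF.mpr hγ⟩
    · rintro ⟨⟨e, f⟩, γ⟩ hx
      have hγ : GP (m + 1) γ := mem_PF.mp (Finset.mem_product.mp hx).2
      obtain ⟨h1, h2, h3, h4, h5, h6, h7⟩ := be_good hγ f
      have hfe := (fe_good e h1 h2 h3 h4 h5).2.2
      simp only [hfe, h7]
    · intro α hα
      have hα' := mem_PrF.mp hα
      obtain ⟨hfe, h1, h2, h3, h4, h5⟩ := unF_good hα'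
      obtain ⟨hbe, hγ⟩ := unB_good h1 h2 h3 h4 h5
      dsimp only
      rw [hbe, hfe]
    · rintro ⟨⟨e, f⟩, γ⟩ hx
      have hγ : GP (m + 1) γ := mem_PF.mp (Finset.mem_product.mp hx).2
      obtain ⟨h1, h2, h3, h4, h5, h6, h7⟩ := be_good hγ f
      have hw := (fe_good e h1 h2 h3 h4 h5).2.1
      simp only [hw, h6]
  rw [← key, Finset.sum_product, Fintype.sum_prod_type]
  simp only [Fintype.sum_bool, if_true, Bool.false_eq_true, if_false, one_mul, mul_one,
    ← Finset.mul_sum]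
  unfold pp
  ring

end S16

namespace S16
open MvPolynomial

/-! ### first return decomposition -/

def frP (π : List Step) (j : ℕ) : Prop := 1 ≤ j ∧ XS (π.take j) = YS (π.take j)

instance frP_dec (π : List Step) : DecidablePred (frP π) := fun _ => by
  unfold frP; exact instDecidableAnd

open scoped Classical in
noncomputable def fr (π : List Step) : ℕ :=
  if h : ∃ j, frP π j then Nat.find h else 0

lemma fr_exists {π : List Step} (hne : π ≠ []) (hd : XS π = YS π) : ∃ j, frP π j :=
  ⟨π.length, by
    constructor
    · have := List.length_pos_iff.mpr hne; omega
    · rw [List.take_length]; exact hd⟩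

lemma fr_facts {π : List Step} (hne : π ≠ []) (hd : XS π = YS π) :
    1 ≤ fr π ∧ fr π ≤ π.length ∧ XS (π.take (fr π)) = YS (π.take (fr π)) ∧
    ∀ j, j < fr π → ¬ frP π j := by
  classical
  have hex := fr_exists hne hd
  have h1 : fr π = Nat.find hex := by unfold fr; rw [dif_pos hex]
  have hspec := Nat.find_spec hex
  have hle : Nat.find hex ≤ π.length := Nat.find_le ⟨by
      have := List.length_pos_iff.mpr hne; omega,
    by rw [List.take_length]; exact hd⟩
  rw [h1]
  exact ⟨hspec.1, hle, hspec.2, fun j hj => Nat.find_min hex hj⟩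

lemma fr_append {k : ℕ} {α : List Step} (hα : α ∈ PrS k) (δ : List Step) :
    fr (α ++ δ) = α.length := by
  classical
  obtain ⟨⟨hs, hx, hy, hc⟩, hne, hstrict⟩ := hα
  have hlen : 1 ≤ α.length := by
    have := List.length_pos_iff.mpr hne; omega
  have hα' : frP (α ++ δ) α.length := by
    constructor
    · exact hlen
    · rw [List.take_left]; omega
  have hex : ∃ j, frP (α ++ δ) j := ⟨α.length, hα'⟩
  have h1 : fr (α ++ δ) = Nat.find hex := by unfold fr; rw [dif_pos hex]
  rw [h1]
  rw [Nat.find_eq_iff]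
  refine ⟨hα', ?_⟩
  intro j hj ⟨hj1, hj2⟩
  have ht : (α ++ δ).take j = α.take j := List.take_append_of_le_length (by omega)
  rw [ht] at hj2
  have hpre : α.take j <+: α := List.take_prefix _ _
  have hlen2 : (α.take j).length = j := by
    rw [List.length_take]; omega
  have hne2 : α.take j ≠ [] := by
    intro h
    rw [h] at hlen2
    simp at hlen2; omega
  have := hstrict _ hpre hne2 (by omega)
  omega

lemma fr_split {n : ℕ} {π : List Step} (hπ : GP (n + 1) π) :
    1 ≤ XS (π.take (fr π)) ∧ XS (π.take (fr π)) ≤ n + 1 ∧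
    π.take (fr π) ∈ PrS (XS (π.take (fr π))) ∧
    GP (n + 1 - XS (π.take (fr π))) (π.drop (fr π)) := by
  obtain ⟨hs, hx, hy, hc⟩ := hπ
  have hne : π ≠ [] := GP_ne_nil ⟨hs, hx, hy, hc⟩
  obtain ⟨ht1, ht2, ht3, ht4⟩ := fr_facts hne (hx.trans hy.symm)
  set t := fr π with htdef
  set α := π.take t with hαdef
  set δ := π.drop t with hδdef
  have hπeq : α ++ δ = π := List.take_append_drop t π
  have hαpre : α <+: π := List.take_prefix _ _
  have hαlen : α.length = t := by rw [hαdef, List.length_take]; omega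
  have hαne : α ≠ [] := by
    intro h; rw [h] at hαlen; simp at hαlen; omega
  have hXY : XS α = YS α := ht3
  have hXsum : XS α + XS δ = n + 1 := by
    rw [← hx, ← hπeq]; simp
  have hYsum : YS α + YS δ = n + 1 := by
    rw [← hy, ← hπeq]; simp
  have hk1 : 1 ≤ XS α := by
    obtain ⟨s, α', hα'⟩ := List.exists_cons_of_ne_nil hαne
    have hsπ : s ∈ π := hαpre.subset (by rw [hα']; simp)
    rcases rook_cases (hs s hsπ) with ⟨h1, h2⟩ | ⟨h1, h2⟩
    · rw [hα']; simp; omega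
    · rw [hα'] at hXY ⊢
      simp at hXY ⊢
      omega
  refine ⟨hk1, by omega, ⟨⟨?_, rfl, hXY.symm, ?_⟩, hαne, ?_⟩, ?_, by omega, by omega, ?_⟩
  · intro st hst; exact hs st (hαpre.subset hst)
  · intro r hr; exact hc r (hr.trans hαpre)
  · intro r hr hrne hrlen
    have hrπ : r <+: π := hr.trans hαpre
    have hle : XS r ≤ YS r := hc r hrπ
    have hrtake : r = π.take r.length := List.prefix_iff_eq_take.mp hrπ
    have hrlen1 : 1 ≤ r.length := by
      have := List.length_pos_iff.mpr hrne; omega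
    have hnp := ht4 r.length (by omega)
    rw [frP] at hnp
    push_neg at hnp
    have := hnp hrlen1
    rw [← hrtake] at this
    omega
  · intro st hst; exact hs st (List.drop_subset _ _ hst)
  · intro q hq
    have h1 : α ++ q <+: π := by
      rw [← hπeq]; exact prefix_append_left hq
    have := hc _ h1
    simp at this
    omega

/-! ### the decomposition identity -/

lemma pp_succ_decomp (n : ℕ) :
    pp (n + 1) = ∑ ij ∈ Finset.HasAntidiagonal.antidiagonal n,
      (∑ α ∈ PrF (ij.1 + 1), wt α) * (∑ δ ∈ PF ij.2, wt δ) := by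
  have hrw : ∀ ij ∈ Finset.HasAntidiagonal.antidiagonal n,
      (∑ α ∈ PrF (ij.1 + 1), wt α) * (∑ δ ∈ PF ij.2, wt δ)
      = ∑ pq ∈ PrF (ij.1 + 1) ×ˢ PF ij.2, wt pq.1 * wt pq.2 := by
    intro ij _
    rw [Finset.sum_mul_sum, Finset.sum_product]
  have key : ∑ x ∈ (Finset.HasAntidiagonal.antidiagonal n).sigma (fun ij => PrF (ij.1 + 1) ×ˢ PF ij.2),
      wt x.2.1 * wt x.2.2 = pp (n + 1) := by
    unfold pp
    refine (Finset.sum_nbij'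
      (s := PF (n + 1))
      (t := (Finset.HasAntidiagonal.antidiagonal n).sigma fun ij => PrF (ij.1 + 1) ×ˢ PF ij.2)
      (f := wt) (g := fun x => wt x.2.1 * wt x.2.2)
      (i := fun π => (⟨(XS (π.take (fr π)) - 1, n + 1 - XS (π.take (fr π))),
        (π.take (fr π), π.drop (fr π))⟩ : Σ _ : ℕ × ℕ, List Step × List Step))
      (j := fun x => x.2.1 ++ x.2.2) ?_ ?_ ?_ ?_ ?_).symm
    · intro π hπ
      have hπS := mem_PF.mp hπ
      obtain ⟨hk1, hk2, hα, hδ⟩ := fr_split hπS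
      simp only [Finset.mem_sigma, Finset.mem_product, Finset.HasAntidiagonal.mem_antidiagonal]
      refine ⟨by omega, ?_, mem_PF.mpr hδ⟩
      rw [mem_PrF, show XS (π.take (fr π)) - 1 + 1 = XS (π.take (fr π)) by omega]
      exact hα
    · rintro ⟨⟨i₀, j₀⟩, α, δ⟩ hx
      simp only [Finset.mem_sigma, Finset.mem_product] at hx
      have hijn : i₀ + j₀ = n := Finset.HasAntidiagonal.mem_antidiagonal.mp hx.1
      have hαS := mem_PrF.mp hx.2.1
      have hδS := mem_PF.mp hx.2.2
      obtain ⟨⟨hs1, hx1, hy1, hc1⟩, hne1, hst1⟩ := hαS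
      obtain ⟨hs2, hx2, hy2, hc2⟩ := hδS
      rw [mem_PF]
      show GP (n + 1) (α ++ δ)
      refine ⟨?_, by simp; omega, by simp; omega, ?_⟩
      · intro st hst
        rcases List.mem_append.mp hst with h | h
        · exact hs1 st h
        · exact hs2 st h
      · intro q hq
        rcases prefix_append_cases hq with h | ⟨q', hq', rfl⟩
        · exact hc1 q h
        · have := hc2 q' hq'
          simp; omega
    · intro π hπ
      dsimp only
      exact List.take_append_drop _ π
    · rintro ⟨⟨i₀, j₀⟩, α, δ⟩ hx
      simp only [Finset.mem_sigma, Finset.mem_product] at hx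
      have hijn : i₀ + j₀ = n := Finset.HasAntidiagonal.mem_antidiagonal.mp hx.1
      have hαS := mem_PrF.mp hx.2.1
      have hfr : fr (α ++ δ) = α.length := fr_append hαS δ
      have hXα : XS α = i₀ + 1 := hαS.1.2.1
      dsimp only
      rw [hfr, List.take_left, List.drop_left, hXα]
      have e1 : i₀ + 1 - 1 = i₀ := by omega
      have e2 : n + 1 - (i₀ + 1) = j₀ := by omega
      rw [e1, e2]
    · intro π hπ
      conv_lhs => rw [← List.take_append_drop (fr π) π]
      exact wt_append _ _
  rw [Finset.sum_congr rfl hrw, ← key]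
  exact Finset.sum_sigma _ _ _

/-! ### the recurrence -/

lemma pp_rec (n : ℕ) :
    pp (n + 1) = (1 + X 0) * (1 + X 1) * (∑ ij ∈ Finset.HasAntidiagonal.antidiagonal n, pp ij.1 * pp ij.2)
      - (1 + X 0 + X 1) * pp n := by
  rw [pp_succ_decomp]
  have hterm : ∀ ij ∈ Finset.HasAntidiagonal.antidiagonal n,
      (∑ α ∈ PrF (ij.1 + 1), wt α) * (∑ δ ∈ PF ij.2, wt δ)
      = (1 + X 0) * (1 + X 1) * (pp ij.1 * pp ij.2)
        - (if ij.1 = 0 then (1 + X 0 + X 1) * pp ij.2 else 0) := by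
    rintro ⟨i₀, j₀⟩ _
    dsimp only
    cases i₀ with
    | zero =>
      rw [if_pos rfl, sum_PrF_one, pp_zero]
      show (X 0 * X 1) * pp j₀ = _
      ring
    | succ m =>
      rw [if_neg (Nat.succ_ne_zero m), sum_PrF_succ]
      show (1 + X 0) * (1 + X 1) * pp (m + 1) * pp j₀ = _
      ring
  rw [Finset.sum_congr rfl hterm, Finset.sum_sub_distrib]
  congr 1
  · rw [Finset.mul_sum]
  · apply Finset.sum_eq_single_of_mem (0, n)
    · exact Finset.HasAntidiagonal.mem_antidiagonal.mpr (by omega)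
    · rintro ⟨b1, b2⟩ hb hbne
      have : b1 + b2 = n := Finset.HasAntidiagonal.mem_antidiagonal.mp hb
      rcases Nat.eq_zero_or_pos b1 with rfl | hpos
      · exfalso; apply hbne; simp; omega
      · rw [if_neg (by omega)]

end S16

namespace S16
open MvPolynomial

lemma pRookW_pp (n : ℕ) : pRookW n = pp n := pRookW_eq n

lemma series_eq :
    (PowerSeries.mk pRookW : PowerSeries (MvPolynomial (Fin 2) ℚ)) =
      1 + PowerSeries.X *
        ((1 + PowerSeries.C (X 0)) * (1 + PowerSeries.C (X 1)) *
            (PowerSeries.mk pRookW) ^ 2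
          - (1 + PowerSeries.C (X 0) + PowerSeries.C (X 1)) * PowerSeries.mk pRookW) := by
  ext n
  cases n with
  | zero =>
    simp [PowerSeries.coeff_zero_eq_constantCoeff, map_add, map_mul, map_sub,
      PowerSeries.constantCoeff_X, pRookW_pp, pp_zero]
  | succ n =>
    rw [PowerSeries.coeff_mk, map_add, PowerSeries.coeff_one, if_neg (Nat.succ_ne_zero n),
      PowerSeries.coeff_succ_X_mul, map_sub]
    have hA : ((1 : PowerSeries (MvPolynomial (Fin 2) ℚ)) +
          PowerSeries.C (X 0)) * (1 + PowerSeries.C (X 1))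
        = PowerSeries.C ((1 + X 0) * (1 + X 1)) := by
      rw [map_mul, map_add, map_add, map_one]
    have hB : ((1 : PowerSeries (MvPolynomial (Fin 2) ℚ)) +
          PowerSeries.C (X 0) + PowerSeries.C (X 1))
        = PowerSeries.C (1 + X 0 + X 1) := by
      rw [map_add, map_add, map_one]
    rw [hA, hB, PowerSeries.coeff_C_mul, PowerSeries.coeff_C_mul, sq, PowerSeries.coeff_mul]
    simp only [PowerSeries.coeff_mk, pRookW_pp]
    rw [pp_rec n, zero_add]

end S16

theorem stmt16 (Pw β : PowerSeries (MvPolynomial (Fin 2) ℚ))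
    (hP : Pw = PowerSeries.mk pRookW)
    (hβ : β = (1 + PowerSeries.C (MvPolynomial.X 0)) * Pw) :
    PowerSeries.C (1 + MvPolynomial.X 1) * PowerSeries.X * β ^ 2 -
      (1 + PowerSeries.C (1 + MvPolynomial.X 0 + MvPolynomial.X 1) * PowerSeries.X) * β +
      PowerSeries.C (1 + MvPolynomial.X 0) = 0 := by
  have hE := S16.series_eq
  subst hβ hP
  simp only [map_add, map_one]
  linear_combination (-(1 : PowerSeries (MvPolynomial (Fin 2) ℚ)) -
    PowerSeries.C (MvPolynomial.X 0)) * hE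
end
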